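/- arXiv:2604.10682 — 5 statements merged into one kernel-verified Lean document; each statement's English description precedes it below -/
import Mathlib

section
/- Let d ≥ 1, m ≥ 0 be integers. Let f : ℝ → ℝ be (m+2)-times continuously differentiable with Σ_{k=1}^{m+2} ‖f^{(k)}‖_{L^∞} ≤ 1, and let g₁, g₂ : ℝ^d → ℝ be m-times continuously differentiable with ‖∇^j g_i‖_{L^∞} < ∞ for all 0 ≤ j ≤ m and i = 1,2. Set M_j := max{‖∇^j g₁‖_{L^∞}, ‖∇^j g₂‖_{L^∞}} for 0 ≤ j ≤ m. Then there is a constant C depending only on d and m such that ‖∇^m (f ∘ g₁ − f ∘ g₂)‖_{L^∞} ≤ C Σ_{n=0}^{m} ‖∇^n (g₁ − g₂)‖_{L^∞} · ( M₁^{m−n} + M_{m−n} ), where for n = m the factor M₁^{0} + M₀ is read as 1 + M₀. -/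
open Set

/-- Step of the discrete log-convexity interpolation. -/
lemma cdb_stepA {a : ℕ → ℝ} {K : ℕ} {C : ℝ} (hC : 1 ≤ C) (hK : 2 ≤ K)
    (ha : ∀ j, 0 ≤ a j)
    (h3 : a K ^ 2 ≤ 8 * (a (K - 1) * a (K + 1)))
    (IH : ∀ j, 1 ≤ j → j ≤ K → a j ^ (K - 1) ≤ C * (a 1 ^ (K - j) * a K ^ (j - 1))) :
    ∀ j, 1 ≤ j → j ≤ K + 1 →
      a j ^ K ≤ (8 ^ K * C) ^ 8 * (a 1 ^ (K + 1 - j) * a (K + 1) ^ (j - 1)) := by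
  have hpow : ∀ (j n : ℕ), 0 ≤ a j ^ n := fun j n => pow_nonneg (ha j) n
  have hbase : (1:ℝ) ≤ 8 ^ K * C := by
    have : (1:ℝ) ≤ 8 ^ K := one_le_pow₀ (by norm_num)
    nlinarith
  have hC8 : (1:ℝ) ≤ (8 ^ K * C) ^ 8 := one_le_pow₀ hbase
  set K₁ : ℝ := 8 ^ (K - 1) * C with hK₁def
  have hK₁ : (1:ℝ) ≤ K₁ := by
    have : (1:ℝ) ≤ 8 ^ (K-1) := one_le_pow₀ (by norm_num)
    nlinarith
  have htop : a K ^ K ≤ K₁ * (a 1 * a (K + 1) ^ (K - 1)) := by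
    have h1 : (a K ^ 2) ^ (K - 1) ≤ (8 * (a (K - 1) * a (K + 1))) ^ (K - 1) :=
      pow_le_pow_left₀ (hpow K 2) h3 _
    have h2 : a (K - 1) ^ (K - 1) ≤ C * (a 1 ^ (K - (K - 1)) * a K ^ (K - 1 - 1)) :=
      IH (K - 1) (by omega) (by omega)
    have hKK : K - (K - 1) = 1 := by omega
    have hKK2 : K - 1 - 1 = K - 2 := by omega
    rw [hKK, hKK2, pow_one] at h2
    have h1' : a K ^ (2 * (K - 1)) ≤ 8 ^ (K - 1) * (a (K - 1) ^ (K - 1) * a (K + 1) ^ (K - 1)) := by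
      calc a K ^ ((2:ℕ) * (K - 1)) = (a K ^ 2) ^ (K - 1) := by rw [pow_mul]
        _ ≤ (8 * (a (K - 1) * a (K + 1))) ^ (K - 1) := h1
        _ = 8 ^ (K - 1) * (a (K - 1) ^ (K - 1) * a (K + 1) ^ (K - 1)) := by
            rw [mul_pow, mul_pow]
    have h3' : a K ^ (2 * (K - 1)) ≤ 8 ^ (K - 1) * ((C * (a 1 * a K ^ (K - 2))) * a (K + 1) ^ (K - 1)) := by
      refine h1'.trans ?_
      have hmul : a (K - 1) ^ (K - 1) * a (K + 1) ^ (K - 1)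
          ≤ (C * (a 1 * a K ^ (K - 2))) * a (K + 1) ^ (K - 1) :=
        mul_le_mul_of_nonneg_right h2 (hpow _ _)
      have h8 : (0:ℝ) ≤ 8 ^ (K - 1) := by positivity
      exact mul_le_mul_of_nonneg_left hmul h8
    rcases eq_or_lt_of_le (ha K) with hz | hz
    · have hzz : a K ^ K = 0 := by
        rw [← hz]; exact zero_pow (by omega)
      rw [hzz]
      have : (0:ℝ) ≤ a 1 * a (K + 1) ^ (K - 1) := mul_nonneg (ha 1) (hpow _ _)
      nlinarith
    · have hsplit : a K ^ (2 * (K - 1)) = a K ^ K * a K ^ (K - 2) := by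
        rw [← pow_add]; congr 1; omega
      rw [hsplit] at h3'
      have hrhs : 8 ^ (K - 1) * ((C * (a 1 * a K ^ (K - 2))) * a (K + 1) ^ (K - 1))
          = (K₁ * (a 1 * a (K + 1) ^ (K - 1))) * a K ^ (K - 2) := by
        rw [hK₁def]; ring
      rw [hrhs] at h3'
      exact le_of_mul_le_mul_right h3' (by positivity)
  -- general j
  intro j hj1 hj2
  rcases eq_or_lt_of_le hj2 with rfl | hjK
  · have e0 : K + 1 - (K + 1) = 0 := by omega
    have e1 : K + 1 - 1 = K := by omega
    rw [e0, e1, pow_zero, one_mul]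
    exact le_mul_of_one_le_left (hpow _ _) hC8
  · have hjK' : j ≤ K := by omega
    have h2 := IH j hj1 hjK'
    have h2' : (a j ^ (K - 1)) ^ K ≤ (C * (a 1 ^ (K - j) * a K ^ (j - 1))) ^ K :=
      pow_le_pow_left₀ (hpow _ _) h2 _
    have hKpow : (a K ^ K) ^ (j - 1) ≤ (K₁ * (a 1 * a (K + 1) ^ (K - 1))) ^ (j - 1) :=
      pow_le_pow_left₀ (hpow _ _) htop _
    have key : (a j ^ K) ^ (K - 1)
        ≤ (C ^ K * K₁ ^ (j - 1)) * (a 1 ^ ((K - j) * K + (j - 1)) * a (K + 1) ^ ((K - 1) * (j - 1))) := by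
      have e1 : (a j ^ K) ^ (K - 1) = (a j ^ (K - 1)) ^ K := by
        rw [← pow_mul, ← pow_mul, Nat.mul_comm]
      rw [e1]
      refine h2'.trans ?_
      have e2 : (C * (a 1 ^ (K - j) * a K ^ (j - 1))) ^ K
          = C ^ K * (a 1 ^ ((K - j) * K) * (a K ^ K) ^ (j - 1)) := by
        rw [mul_pow, mul_pow, ← pow_mul, ← pow_mul, ← pow_mul, Nat.mul_comm (j-1) K]
      rw [e2]
      have hmono : a 1 ^ ((K - j) * K) * (a K ^ K) ^ (j - 1)
          ≤ a 1 ^ ((K - j) * K) * (K₁ * (a 1 * a (K + 1) ^ (K - 1))) ^ (j - 1) :=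
        mul_le_mul_of_nonneg_left hKpow (hpow _ _)
      have hCK : (0:ℝ) ≤ C ^ K := by positivity
      calc C ^ K * (a 1 ^ ((K - j) * K) * (a K ^ K) ^ (j - 1))
          ≤ C ^ K * (a 1 ^ ((K - j) * K) * (K₁ * (a 1 * a (K + 1) ^ (K - 1))) ^ (j - 1)) :=
            mul_le_mul_of_nonneg_left hmono hCK
        _ = (C ^ K * K₁ ^ (j - 1)) * (a 1 ^ ((K - j) * K + (j - 1)) * a (K + 1) ^ ((K - 1) * (j - 1))) := by
            rw [mul_pow, mul_pow, pow_add, ← pow_mul]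
            ring
    have eexp : (K - j) * K + (j - 1) = (K + 1 - j) * (K - 1) := by
      zify [hjK', hj1, (show 1 ≤ K by omega), (show j ≤ K + 1 by omega)]
      ring
    have econst : C ^ K * K₁ ^ (j - 1) ≤ ((8 ^ K * C) ^ 8) ^ (K - 1) := by
      have c1 : C ^ K ≤ (8 ^ K * C) ^ K := by
        refine pow_le_pow_left₀ (by linarith) ?_ _
        nlinarith [one_le_pow₀ (show (1:ℝ) ≤ 8 by norm_num) (n := K)]
      have c2 : K₁ ^ (j - 1) ≤ (8 ^ K * C) ^ (j - 1) := by
        refine pow_le_pow_left₀ (by linarith) ?_ _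
        rw [hK₁def]
        have : (8:ℝ) ^ (K - 1) ≤ 8 ^ K := pow_le_pow_right₀ (by norm_num) (by omega)
        nlinarith
      have c3 : (8 ^ K * C) ^ (j - 1) ≤ (8 ^ K * C) ^ K := pow_le_pow_right₀ hbase (by omega)
      have c4 : C ^ K * K₁ ^ (j - 1) ≤ (8 ^ K * C) ^ K * (8 ^ K * C) ^ K := by
        have h25 := c2.trans c3
        have h0 : (0:ℝ) ≤ C ^ K := by positivity
        have h1 : (0:ℝ) ≤ K₁ ^ (j - 1) := by positivity
        have h2 : (0:ℝ) ≤ (8 ^ K * C) ^ K := by positivity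
        nlinarith
      have c5 : (8 ^ K * C) ^ K * (8 ^ K * C) ^ K = (8 ^ K * C) ^ (2 * K) := by
        rw [← pow_add]; congr 1; ring
      have c6 : (8 ^ K * C) ^ (2 * K) ≤ (8 ^ K * C) ^ (8 * (K - 1)) :=
        pow_le_pow_right₀ hbase (by omega)
      rw [c5] at c4
      refine c4.trans (c6.trans ?_)
      rw [← pow_mul]
    have final : (a j ^ K) ^ (K - 1)
        ≤ ((8 ^ K * C) ^ 8 * (a 1 ^ (K + 1 - j) * a (K + 1) ^ (j - 1))) ^ (K - 1) := by
      refine key.trans ?_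
      have e5 : ((8 ^ K * C) ^ 8 * (a 1 ^ (K + 1 - j) * a (K + 1) ^ (j - 1))) ^ (K - 1)
          = ((8 ^ K * C) ^ 8) ^ (K - 1) * (a 1 ^ ((K + 1 - j) * (K - 1)) * a (K + 1) ^ ((j - 1) * (K - 1))) := by
        ring
      rw [e5, ← eexp, Nat.mul_comm (j - 1) (K - 1)]
      have hx : (0:ℝ) ≤ a 1 ^ ((K - j) * K + (j - 1)) * a (K + 1) ^ ((K - 1) * (j - 1)) :=
        mul_nonneg (hpow _ _) (hpow _ _)
      exact mul_le_mul econst le_rfl hx (by positivity)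
    exact (pow_le_pow_iff_left₀ (hpow _ _)
      (mul_nonneg (by positivity) (mul_nonneg (hpow _ _) (hpow _ _)))
      (show K - 1 ≠ 0 by omega)).mp final

/-- Discrete log-convexity interpolation (cumulative over `k ≤ K`). -/
lemma cdb_seqA (K : ℕ) : ∃ C : ℝ, 1 ≤ C ∧ ∀ (a : ℕ → ℝ), (∀ j, 0 ≤ a j) →
    ∀ k, k ≤ K → (∀ j, 1 ≤ j → j + 2 ≤ k → a (j + 1) ^ 2 ≤ 8 * (a j * a (j + 2))) →
    ∀ j, 1 ≤ j → j ≤ k → a j ^ (k - 1) ≤ C * (a 1 ^ (k - j) * a k ^ (j - 1)) := by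
  induction K with
  | zero =>
    exact ⟨1, le_rfl, fun a ha k hk h3 j hj1 hj2 => by omega⟩
  | succ K IH =>
    obtain ⟨C, hC, hIH⟩ := IH
    refine ⟨(8 ^ K * C) ^ 8, ?_, ?_⟩
    · refine one_le_pow₀ ?_
      nlinarith [one_le_pow₀ (show (1:ℝ) ≤ 8 by norm_num) (n := K)]
    intro a ha k hk h3 j hj1 hj2
    have hgrow : C ≤ (8 ^ K * C) ^ 8 := by
      have h1 : (1:ℝ) ≤ 8 ^ K * C := by
        nlinarith [one_le_pow₀ (show (1:ℝ) ≤ 8 by norm_num) (n := K)]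
      calc C ≤ 8 ^ K * C := by nlinarith [one_le_pow₀ (show (1:ℝ) ≤ 8 by norm_num) (n := K)]
        _ ≤ (8 ^ K * C) ^ 8 := le_self_pow₀ h1 (by norm_num)
    rcases Nat.lt_or_ge k (K + 1) with hlt | hge
    · have := hIH a ha k (by omega) h3 j hj1 hj2
      refine this.trans ?_
      exact mul_le_mul_of_nonneg_right hgrow
        (mul_nonneg (pow_nonneg (ha 1) _) (pow_nonneg (ha k) _))
    · have hkK : k = K + 1 := by omega
      subst hkK
      rcases Nat.lt_or_ge K 2 with hK2 | hK2
      · -- K + 1 ≤ 2 : small cases, direct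
        interval_cases K
        · -- k = 1, j = 1
          have : j = 1 := by omega
          subst this
          simp only [Nat.sub_self, pow_zero, Nat.sub_zero, pow_one, mul_one]
          nlinarith [ha 1, one_le_pow₀ (show (1:ℝ) ≤ 8 by norm_num) (n := 0)]
        · -- k = 2
          have hC' : (1:ℝ) ≤ (8 ^ 1 * C) ^ 8 := one_le_pow₀ (by nlinarith)
          interval_cases j <;>
          · norm_num
            nlinarith [ha 1, ha 2, hC']
      · -- main step
        have hKK1 : K + 1 - 1 = K := by omega
        have step := cdb_stepA (a := a) (K := K) (C := C) hC hK2 ha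
          (by
            have := h3 (K - 1) (by omega) (by omega)
            have e1 : K - 1 + 1 = K := by omega
            have e2 : K - 1 + 2 = K + 1 := by omega
            rwa [e1, e2] at this)
          (fun j hj1 hj2 => hIH a ha K (by omega)
            (fun i hi1 hi2 => h3 i hi1 (by omega)) j hj1 hj2)
        have := step j hj1 hj2
        rwa [hKK1]

/-- Products of intermediate derivative bounds controlled by `a 1 ^ k + a k`. -/
lemma cdb_seqT (K : ℕ) : ∃ C : ℝ, 1 ≤ C ∧ ∀ a : ℕ → ℝ, (∀ j, 0 ≤ a j) →
    (∀ j, 1 ≤ j → j + 2 ≤ K → a (j + 1) ^ 2 ≤ 8 * (a j * a (j + 2))) →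
    ∀ p q, 1 ≤ q → p + q ≤ K →
      (a 1 ^ p * a q ≤ C * (a 1 ^ (p + q) + a (p + q)) ∧
       (1 ≤ p → a p * a q ≤ C * (a 1 ^ (p + q) + a (p + q)))) := by
  obtain ⟨CA, hCA, hA⟩ := cdb_seqA K
  refine ⟨CA ^ 4, one_le_pow₀ hCA, ?_⟩
  intro a ha h3 p q hq hpq
  set k := p + q with hk
  have hk1 : 1 ≤ k := by omega
  set T := a 1 ^ k + a k with hT
  have hT0 : 0 ≤ T := add_nonneg (pow_nonneg (ha 1) _) (ha k)
  have ha1T : a 1 ^ k ≤ T := le_add_of_nonneg_right (ha k)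
  have hakT : a k ≤ T := le_add_of_nonneg_left (pow_nonneg (ha 1) _)
  have hCA2 : (1:ℝ) ≤ CA ^ 2 := one_le_pow₀ hCA
  have hCA4 : (1:ℝ) ≤ CA ^ 4 := one_le_pow₀ hCA
  -- subclaim : for 1 ≤ r ≤ k, (a r) ^ k ≤ CA^2 * T ^ r
  have sub : ∀ r, 1 ≤ r → r ≤ k → a r ^ k ≤ CA ^ 2 * T ^ r := by
    intro r hr1 hrk
    rcases Nat.lt_or_ge k 2 with hk2 | hk2
    · have hkk : k = 1 := by omega
      have hrr : r = 1 := by omega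
      subst hrr
      rw [hkk] at hT ⊢
      have h1T : a 1 ≤ T := by rw [hT]; nlinarith [ha 1]
      calc a 1 ^ 1 = a 1 := pow_one _
        _ ≤ T := h1T
        _ = 1 * T ^ 1 := by rw [pow_one, one_mul]
        _ ≤ CA ^ 2 * T ^ 1 := by
            exact mul_le_mul_of_nonneg_right hCA2 (by rw [pow_one]; exact hT0)
    · have h1 := hA a ha k (by omega) (fun i hi1 hi2 => h3 i hi1 (by omega)) r hr1 hrk
      have h2 : (a r ^ (k - 1)) ^ k ≤ (CA * (a 1 ^ (k - r) * a k ^ (r - 1))) ^ k :=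
        pow_le_pow_left₀ (pow_nonneg (ha r) _) h1 _
      have e1 : (a r ^ (k - 1)) ^ k = (a r ^ k) ^ (k - 1) := by
        rw [← pow_mul, ← pow_mul, Nat.mul_comm]
      have hb2 : (a 1 ^ (k - r)) ^ k ≤ T ^ (k - r) := by
        calc (a 1 ^ (k - r)) ^ k = (a 1 ^ k) ^ (k - r) := by
              rw [← pow_mul, ← pow_mul, Nat.mul_comm]
          _ ≤ T ^ (k - r) := pow_le_pow_left₀ (pow_nonneg (ha 1) _) ha1T _
      have hb3 : (a k ^ (r - 1)) ^ k ≤ T ^ ((r - 1) * k) := by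
        calc (a k ^ (r - 1)) ^ k = a k ^ ((r - 1) * k) := by rw [← pow_mul]
          _ ≤ T ^ ((r - 1) * k) := pow_le_pow_left₀ (ha k) hakT _
      have eexp : (k - r) + (r - 1) * k = r * (k - 1) := by
        zify [hrk, hr1, (show 1 ≤ k by omega)]
        ring
      have hrhs : (CA * (a 1 ^ (k - r) * a k ^ (r - 1))) ^ k ≤ CA ^ k * T ^ (r * (k - 1)) := by
        rw [mul_pow, mul_pow, ← eexp, pow_add]
        refine mul_le_mul_of_nonneg_left ?_ (by positivity)
        rw [show T ^ (k - r + (r - 1) * k) = T ^ (k - r) * T ^ ((r - 1) * k) from pow_add T _ _]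
        exact mul_le_mul hb2 hb3 (pow_nonneg (pow_nonneg (ha k) _) _) (by positivity)
      have hconst : CA ^ k * T ^ (r * (k - 1)) ≤ (CA ^ 2 * T ^ r) ^ (k - 1) := by
        have e2 : (CA ^ 2 * T ^ r) ^ (k - 1) = CA ^ (2 * (k - 1)) * T ^ (r * (k - 1)) := by
          rw [mul_pow, ← pow_mul, ← pow_mul]
        rw [e2]
        refine mul_le_mul_of_nonneg_right ?_ (by positivity)
        exact pow_le_pow_right₀ hCA (by omega)
      have final : (a r ^ k) ^ (k - 1) ≤ (CA ^ 2 * T ^ r) ^ (k - 1) := by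
        rw [← e1]
        exact h2.trans (hrhs.trans hconst)
      exact (pow_le_pow_iff_left₀ (pow_nonneg (ha r) _) (by positivity)
        (show k - 1 ≠ 0 by omega)).mp final
  constructor
  · -- a 1 ^ p * a q ≤ CA^4 * T
    have hql := sub q hq (by omega)
    have h1 : (a 1 ^ p * a q) ^ k ≤ T ^ p * (CA ^ 2 * T ^ q) := by
      rw [mul_pow]
      refine mul_le_mul ?_ hql (pow_nonneg (ha q) _) (by positivity)
      calc (a 1 ^ p) ^ k = (a 1 ^ k) ^ p := by rw [← pow_mul, ← pow_mul, Nat.mul_comm]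
        _ ≤ T ^ p := pow_le_pow_left₀ (pow_nonneg (ha 1) _) ha1T _
    have h2 : T ^ p * (CA ^ 2 * T ^ q) = CA ^ 2 * T ^ k := by
      rw [hk, pow_add]; ring
    have h3' : CA ^ 2 * T ^ k ≤ (CA ^ 4 * T) ^ k := by
      rw [mul_pow]
      refine mul_le_mul_of_nonneg_right ?_ (by positivity)
      calc CA ^ 2 ≤ CA ^ 4 := pow_le_pow_right₀ hCA (by omega)
        _ ≤ (CA ^ 4) ^ k := le_self_pow₀ hCA4 (by omega)
    have := (h1.trans_eq h2).trans h3'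
    exact (pow_le_pow_iff_left₀
      (mul_nonneg (pow_nonneg (ha 1) _) (ha q)) (by positivity) (by omega)).mp this
  · intro hp
    have hql := sub q hq (by omega)
    have hpl := sub p hp (by omega)
    have h1 : (a p * a q) ^ k ≤ (CA ^ 2 * T ^ p) * (CA ^ 2 * T ^ q) := by
      rw [mul_pow]
      exact mul_le_mul hpl hql (pow_nonneg (ha q) _) (by positivity)
    have h2 : (CA ^ 2 * T ^ p) * (CA ^ 2 * T ^ q) = CA ^ 4 * T ^ k := by
      rw [hk, pow_add]; ring
    have h3' : CA ^ 4 * T ^ k ≤ (CA ^ 4 * T) ^ k := by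
      rw [mul_pow]
      refine mul_le_mul_of_nonneg_right (le_self_pow₀ hCA4 (by omega)) (by positivity)
    have := (h1.trans_eq h2).trans h3'
    exact (pow_le_pow_iff_left₀ (mul_nonneg (ha p) (ha q)) (by positivity) (by omega)).mp this

/-- One-dimensional Landau-type inequality with constant 8. -/
lemma cdb_landau1 {u u' u'' : ℝ → ℝ} {A B : ℝ}
    (hu : ∀ t, HasDerivAt u (u' t) t) (hu' : ∀ t, HasDerivAt u' (u'' t) t)
    (hA : ∀ t, |u t| ≤ A) (hB : ∀ t, |u'' t| ≤ B) (t : ℝ) :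
    |u' t| ^ 2 ≤ 8 * (A * B) := by
  have hA0 : 0 ≤ A := (abs_nonneg _).trans (hA 0)
  have hB0 : 0 ≤ B := (abs_nonneg _).trans (hB 0)
  have key : ∀ s : ℝ, 0 < s → |u' t| * s ≤ 2 * A + B * s ^ 2 := by
    intro s hs
    obtain ⟨ξ, hξ, hslope⟩ := exists_hasDerivAt_eq_slope u u' (show t < t + s by linarith)
      (fun x _ => (hu x).continuousAt.continuousWithinAt) (fun x _ => hu x)
    have hξ1 : |u' ξ| * s ≤ 2 * A := by
      rw [hslope, show t + s - t = s by ring, abs_div, abs_of_pos hs,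
        div_mul_cancel₀ _ (ne_of_gt hs)]
      calc |u (t + s) - u t| ≤ |u (t + s)| + |u t| := abs_sub _ _
        _ ≤ 2 * A := by linarith [hA (t + s), hA t]
    have hlip : |u' t - u' ξ| ≤ B * s := by
      have h := convex_univ.norm_image_sub_le_of_norm_hasDerivWithin_le
        (f := u') (f' := u'') (s := (Set.univ : Set ℝ))
        (fun x _ => (hu' x).hasDerivWithinAt) (fun x _ => hB x) (Set.mem_univ ξ) (Set.mem_univ t)
      simp only [Real.norm_eq_abs] at h
      refine h.trans ?_
      have hd : |t - ξ| ≤ s := by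
        rw [abs_sub_comm, abs_of_pos (by linarith [hξ.1] : (0:ℝ) < ξ - t)]
        linarith [hξ.2]
      exact mul_le_mul_of_nonneg_left hd hB0
    have htri : |u' t| ≤ |u' ξ| + |u' t - u' ξ| := by
      calc |u' t| = |u' ξ + (u' t - u' ξ)| := by ring_nf
        _ ≤ |u' ξ| + |u' t - u' ξ| := abs_add_le _ _
    calc |u' t| * s ≤ (|u' ξ| + B * s) * s := by
          refine mul_le_mul_of_nonneg_right ?_ hs.le
          linarith
      _ = |u' ξ| * s + B * s ^ 2 := by ring
      _ ≤ 2 * A + B * s ^ 2 := by linarith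
  rcases eq_or_lt_of_le (abs_nonneg (u' t)) with hL | hL
  · rw [← hL]
    nlinarith
  · rcases eq_or_lt_of_le hB0 with hB' | hB'
    · exfalso
      have hs : (0:ℝ) < (2 * A + 1) / |u' t| := by positivity
      have := key _ hs
      rw [mul_div_cancel₀ _ (ne_of_gt hL), ← hB'] at this
      linarith
    · have hs : (0:ℝ) < |u' t| / (2 * B) := by positivity
      have h := key _ hs
      have hB2 : (0:ℝ) < 2 * B := by linarith
      rw [div_pow] at h
      have h' : |u' t| * (|u' t| / (2 * B)) * (4 * B) ≤ (2 * A + |u' t| ^ 2 / (2 * B) ^ 2 * B) * (4 * B) :=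
        mul_le_mul_of_nonneg_right (by linarith) (by linarith)
      have e1 : |u' t| * (|u' t| / (2 * B)) * (4 * B) = 2 * |u' t| ^ 2 := by
        field_simp; ring
      have e2 : (2 * A + |u' t| ^ 2 / (2 * B) ^ 2 * B) * (4 * B) = 8 * (A * B) + |u' t| ^ 2 := by
        field_simp; ring
      rw [e1, e2] at h'
      linarith

/-- Landau inequality for iterated Fréchet derivatives of a real-valued map. -/
lemma cdb_landauE {E : Type*} [NormedAddCommGroup E] [NormedSpace ℝ E] {h : E → ℝ} {n : ℕ}
    {A B : ℝ} (hh : ContDiff ℝ (n + 2 : ℕ) h)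
    (hA : ∀ x, ‖iteratedFDeriv ℝ n h x‖ ≤ A)
    (hB : ∀ x, ‖iteratedFDeriv ℝ (n + 2) h x‖ ≤ B) (x : E) :
    ‖iteratedFDeriv ℝ (n + 1) h x‖ ≤ Real.sqrt (8 * (A * B)) := by
  have hA0 : 0 ≤ A := (norm_nonneg _).trans (hA x)
  have hB0 : 0 ≤ B := (norm_nonneg _).trans (hB x)
  have hAB : (0:ℝ) ≤ 8 * (A * B) := by nlinarith
  refine ContinuousMultilinearMap.opNorm_le_bound (Real.sqrt_nonneg _) ?_
  intro w
  set v : E := w 0 with hv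
  set ws : Fin n → E := Fin.tail w with hws
  set P : ℝ := ∏ i, ‖ws i‖ with hP
  have hP0 : 0 ≤ P := Finset.prod_nonneg fun i _ => norm_nonneg _
  have hd1 : Differentiable ℝ (iteratedFDeriv ℝ n h) :=
    hh.differentiable_iteratedFDeriv (by exact_mod_cast (by omega : n < n + 2))
  have hd2 : Differentiable ℝ (iteratedFDeriv ℝ (n + 1) h) :=
    hh.differentiable_iteratedFDeriv (by exact_mod_cast (by omega : n + 1 < n + 2))
  set γ : ℝ → E := fun s => x + s • v with hγ
  have hline : ∀ s : ℝ, HasDerivAt γ v s := by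
    intro s
    simpa [hγ] using ((hasDerivAt_id s).smul_const v).const_add x
  have hu : ∀ s : ℝ, HasDerivAt (fun s => iteratedFDeriv ℝ n h (γ s) ws)
      (iteratedFDeriv ℝ (n + 1) h (γ s) (Fin.cons v ws)) s := by
    intro s
    have h1 : HasDerivAt (iteratedFDeriv ℝ n h ∘ γ)
        (fderiv ℝ (iteratedFDeriv ℝ n h) (γ s) v) s :=
      (hd1 (γ s)).hasFDerivAt.comp_hasDerivAt s (hline s)
    have h2 := ((ContinuousMultilinearMap.apply ℝ (fun _ : Fin n => E) ℝ
      ws).hasFDerivAt).comp_hasDerivAt s h1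
    have e : iteratedFDeriv ℝ (n + 1) h (γ s) (Fin.cons v ws)
        = (fderiv ℝ (iteratedFDeriv ℝ n h) (γ s)) v ws := by
      rw [iteratedFDeriv_succ_apply_left]
      simp
    rw [e]
    exact h2
  have hu1 : ∀ s : ℝ, HasDerivAt
      (fun s => iteratedFDeriv ℝ (n + 1) h (γ s) (Fin.cons v ws))
      (iteratedFDeriv ℝ (n + 2) h (γ s) (Fin.cons v (Fin.cons v ws))) s := by
    intro s
    have h1 : HasDerivAt (iteratedFDeriv ℝ (n + 1) h ∘ γ)
        (fderiv ℝ (iteratedFDeriv ℝ (n + 1) h) (γ s) v) s :=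
      (hd2 (γ s)).hasFDerivAt.comp_hasDerivAt s (hline s)
    have h2 := ((ContinuousMultilinearMap.apply ℝ (fun _ : Fin (n + 1) => E) ℝ
      (Fin.cons v ws)).hasFDerivAt).comp_hasDerivAt s h1
    have e : iteratedFDeriv ℝ (n + 2) h (γ s) (Fin.cons v (Fin.cons v ws))
        = (fderiv ℝ (iteratedFDeriv ℝ (n + 1) h) (γ s)) v (Fin.cons v ws) := by
      rw [iteratedFDeriv_succ_apply_left]
      simp only [Fin.cons_zero, Fin.tail_cons]
    rw [e]
    exact h2
  have hband : ∀ s : ℝ, |iteratedFDeriv ℝ n h (γ s) ws| ≤ A * P := by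
    intro s
    rw [← Real.norm_eq_abs]
    refine (ContinuousMultilinearMap.le_opNorm _ _).trans ?_
    exact mul_le_mul_of_nonneg_right (hA _) hP0
  have hband2 : ∀ s : ℝ, |iteratedFDeriv ℝ (n + 2) h (γ s) (Fin.cons v (Fin.cons v ws))|
      ≤ B * (‖v‖ * (‖v‖ * P)) := by
    intro s
    rw [← Real.norm_eq_abs]
    refine (ContinuousMultilinearMap.le_opNorm _ _).trans ?_
    have hcc : (∏ i : Fin (n + 2), ‖(Fin.cons v (Fin.cons v ws) : Fin (n + 2) → E) i‖)
        = ‖v‖ * (‖v‖ * P) := by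
      rw [Fin.prod_univ_succ]
      simp only [Fin.cons_zero, Fin.cons_succ]
      rw [Fin.prod_univ_succ]
      simp only [Fin.cons_zero, Fin.cons_succ, hP]
    rw [hcc]
    exact mul_le_mul_of_nonneg_right (hB _)
      (by
        have : (0:ℝ) ≤ ‖v‖ * (‖v‖ * P) := by positivity
        exact this)
  have key := cdb_landau1 hu hu1 hband hband2 0
  have hγ0 : γ 0 = x := by simp [hγ]
  rw [hγ0] at key
  have hw : Fin.cons v ws = w := Fin.cons_self_tail w
  rw [hw] at key
  -- conclude
  have hprod : ∏ i, ‖w i‖ = ‖v‖ * P := by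
    rw [Fin.prod_univ_succ]
    rfl
  rw [hprod]
  have hrhs : (Real.sqrt (8 * (A * B)) * (‖v‖ * P)) ^ 2 = 8 * (A * B) * (‖v‖ * P) ^ 2 := by
    rw [mul_pow, Real.sq_sqrt hAB]
  have key2 : |iteratedFDeriv ℝ (n + 1) h x w| ^ 2
      ≤ (Real.sqrt (8 * (A * B)) * (‖v‖ * P)) ^ 2 := by
    rw [hrhs]
    calc |iteratedFDeriv ℝ (n + 1) h x w| ^ 2
        ≤ 8 * ((A * P) * (B * (‖v‖ * (‖v‖ * P)))) := key
      _ = 8 * (A * B) * (‖v‖ * P) ^ 2 := by ring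
  have := (pow_le_pow_iff_left₀ (abs_nonneg _)
    (mul_nonneg (Real.sqrt_nonneg _) (mul_nonneg (norm_nonneg _) hP0)) two_ne_zero).mp key2
  rwa [Real.norm_eq_abs]

lemma cdb_fderiv_comp {E : Type*} [NormedAddCommGroup E] [NormedSpace ℝ E]
    {u : ℝ → ℝ} {g : E → ℝ} (hu : Differentiable ℝ u) (hg : Differentiable ℝ g) :
    fderiv ℝ (fun y => u (g y)) = fun y => deriv u (g y) • fderiv ℝ g y :=
  funext fun y => (((hu (g y)).hasDerivAt).comp_hasFDerivAt y (hg y).hasFDerivAt).fderiv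

/-- Uniform bound for iterated derivatives of a composition `u ∘ g`. -/
lemma cdb_comp {E : Type*} [NormedAddCommGroup E] [NormedSpace ℝ E] (I : ℕ) :
    ∃ C : ℝ, 1 ≤ C ∧ ∀ i ≤ I, ∀ (u : ℝ → ℝ) (g : E → ℝ) (a : ℕ → ℝ),
    ContDiff ℝ (i : ℕ) u → (∀ j ≤ i, ∀ t, |iteratedDeriv j u t| ≤ 1) →
    ContDiff ℝ (i : ℕ) g → (∀ j, 1 ≤ j → j ≤ i → ∀ x, ‖iteratedFDeriv ℝ j g x‖ ≤ a j) →
    (∀ j, 0 ≤ a j) → (∀ j, 1 ≤ j → j + 2 ≤ i → a (j + 1) ^ 2 ≤ 8 * (a j * a (j + 2))) →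
    ∀ x, ‖iteratedFDeriv ℝ i (fun y => u (g y)) x‖ ≤
      C * (if i = 0 then 1 else a 1 ^ i + a i) := by
  induction I with
  | zero =>
    refine ⟨1, le_rfl, ?_⟩
    intro i hi u g a hu hub hg hgb ha h3 x
    have hi0 : i = 0 := by omega
    subst hi0
    rw [norm_iteratedFDeriv_zero, if_pos rfl, Real.norm_eq_abs, one_mul]
    exact hub 0 le_rfl (g x)
  | succ I IH =>
    obtain ⟨C0, hC0, hIH⟩ := IH
    obtain ⟨CT, hCT, hT⟩ := cdb_seqT (I + 1)
    refine ⟨C0 * (2 * CT) * 2 ^ I * (I + 1) + C0, ?_, ?_⟩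
    · have h1 : (0:ℝ) ≤ C0 * (2 * CT) * 2 ^ I * (I + 1) := by positivity
      linarith
    intro i hi u g a hu hub hg hgb ha h3 x
    have hE0 : (0:ℝ) ≤ (if i = 0 then 1 else a 1 ^ i + a i) := by
      split
      · norm_num
      · exact add_nonneg (pow_nonneg (ha 1) _) (ha i)
    rcases Nat.lt_or_ge i (I + 1) with hlt | hge
    · refine (hIH i (by omega) u g a hu hub hg hgb ha h3 x).trans ?_
      refine mul_le_mul_of_nonneg_right ?_ hE0
      have : (0:ℝ) ≤ C0 * (2 * CT) * 2 ^ I * (I + 1) := by positivity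
      linarith
    · have hiI : i = I + 1 := by omega
      subst hiI
      -- setup
      set T : ℝ := a 1 ^ (I + 1) + a (I + 1) with hTdef
      have hT0 : 0 ≤ T := add_nonneg (pow_nonneg (ha 1) _) (ha _)
      have hu1 : ContDiff ℝ ((I : WithTop ℕ∞) + 1) u := by exact_mod_cast hu
      have hud : ContDiff ℝ (I : ℕ) (deriv u) := (contDiff_succ_iff_deriv.mp hu1).2.2
      have hudiff : Differentiable ℝ u := hu1.differentiable (by simp)
      have hgdiff : Differentiable ℝ g := hg.differentiable (by simp)
      have hgI : ContDiff ℝ (I : ℕ) g := hg.of_le (by exact_mod_cast Nat.le_succ I)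
      have hcomp : ContDiff ℝ (I : ℕ) (fun y => deriv u (g y)) := hud.comp hgI
      have hfg : ContDiff ℝ (I : ℕ) (fderiv ℝ g) :=
        hg.fderiv_right (m := (I : ℕ∞)) (by exact_mod_cast le_rfl)
      -- reduce to derivative of fderiv
      rw [← norm_iteratedFDeriv_fderiv, cdb_fderiv_comp hudiff hgdiff]
      have leib := norm_iteratedFDeriv_smul_le (𝕜 := ℝ) (f := fun y => deriv u (g y))
        (g := fderiv ℝ g) hcomp hfg x (le_refl (I : WithTop ℕ∞))
      refine leib.trans ?_
      -- bound each term of the sum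
      have hterm : ∀ l ∈ Finset.range (I + 1),
          (I.choose l : ℝ) * ‖iteratedFDeriv ℝ l (fun y => deriv u (g y)) x‖ *
            ‖iteratedFDeriv ℝ (I - l) (fderiv ℝ g) x‖
          ≤ (I.choose l : ℝ) * (C0 * (2 * CT) * T) := by
        intro l hl
        have hlI : l ≤ I := by
          have := Finset.mem_range.mp hl
          omega
        -- first factor
        have hf1 : ‖iteratedFDeriv ℝ l (fun y => deriv u (g y)) x‖ ≤
            C0 * (if l = 0 then 1 else a 1 ^ l + a l) := by
          refine hIH l hlI (deriv u) g a (hud.of_le (by exact_mod_cast hlI)) ?_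
            (hgI.of_le (by exact_mod_cast hlI)) (fun j hj1 hj2 => hgb j hj1 (by omega)) ha
            (fun j hj1 hj2 => h3 j hj1 (by omega)) x
          intro j hj t
          have := hub (j + 1) (by omega) t
          rwa [iteratedDeriv_succ'] at this
        -- second factor
        have hf2 : ‖iteratedFDeriv ℝ (I - l) (fderiv ℝ g) x‖ ≤ a (I + 1 - l) := by
          rw [norm_iteratedFDeriv_fderiv]
          have e : I - l + 1 = I + 1 - l := by omega
          rw [e]
          exact hgb (I + 1 - l) (by omega) (by omega) x
        -- product of the bounds
        have hprod : (if l = 0 then (1:ℝ) else a 1 ^ l + a l) * a (I + 1 - l) ≤ 2 * CT * T := by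
          rcases Nat.eq_zero_or_pos l with rfl | hlpos
          · rw [if_pos rfl, one_mul, Nat.sub_zero]
            have h5 : a (I + 1) ≤ T := le_add_of_nonneg_left (pow_nonneg (ha 1) _)
            nlinarith
          · rw [if_neg (by omega)]
            have hpq : l + (I + 1 - l) = I + 1 := by omega
            have h1 := (hT a ha (fun j hj1 hj2 => h3 j hj1 (by omega)) l (I + 1 - l)
              (by omega) (by omega)).1
            have h2 := (hT a ha (fun j hj1 hj2 => h3 j hj1 (by omega)) l (I + 1 - l)
              (by omega) (by omega)).2 hlpos
            rw [hpq] at h1 h2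
            have := add_le_add h1 h2
            calc (a 1 ^ l + a l) * a (I + 1 - l)
                = a 1 ^ l * a (I + 1 - l) + a l * a (I + 1 - l) := by ring
              _ ≤ CT * T + CT * T := add_le_add h1 h2
              _ = 2 * CT * T := by ring
        calc (I.choose l : ℝ) * ‖iteratedFDeriv ℝ l (fun y => deriv u (g y)) x‖ *
              ‖iteratedFDeriv ℝ (I - l) (fderiv ℝ g) x‖
            ≤ (I.choose l : ℝ) * (C0 * (if l = 0 then 1 else a 1 ^ l + a l)) * a (I + 1 - l) := by
              refine mul_le_mul ?_ hf2 (norm_nonneg _) ?_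
              · exact mul_le_mul_of_nonneg_left hf1 (by positivity)
              · have h0 : (0:ℝ) ≤ (if l = 0 then (1:ℝ) else a 1 ^ l + a l) := by
                  split
                  · norm_num
                  · exact add_nonneg (pow_nonneg (ha 1) _) (ha l)
                positivity
          _ = (I.choose l : ℝ) * (C0 * ((if l = 0 then 1 else a 1 ^ l + a l) * a (I + 1 - l))) := by
              ring
          _ ≤ (I.choose l : ℝ) * (C0 * (2 * CT * T)) := by
              refine mul_le_mul_of_nonneg_left (mul_le_mul_of_nonneg_left hprod (by linarith))
                (by positivity)
          _ = (I.choose l : ℝ) * (C0 * (2 * CT) * T) := by ring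
      refine (Finset.sum_le_sum hterm).trans ?_
      rw [← Finset.sum_mul, ← Nat.cast_sum, Nat.sum_range_choose]
      rw [if_neg (by omega)]
      have hTT : (2:ℝ) ^ I * (C0 * (2 * CT) * T) ≤ (C0 * (2 * CT) * 2 ^ I * (I + 1) + C0) * T := by
        have e1 : (2:ℝ) ^ I * (C0 * (2 * CT) * T) = (C0 * (2 * CT) * 2 ^ I) * T := by ring
        rw [e1]
        refine mul_le_mul_of_nonneg_right ?_ hT0
        have h1 : (0:ℝ) ≤ C0 * (2 * CT) * 2 ^ I := by positivity
        have h2 : (1:ℝ) ≤ (I:ℝ) + 1 := by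
          have : (0:ℝ) ≤ (I:ℝ) := Nat.cast_nonneg I
          linarith
        nlinarith
      push_cast
      exact hTT

/-- Main inductive bound for differences of compositions. -/
lemma cdb_diff {E : Type*} [NormedAddCommGroup E] [NormedSpace ℝ E] (M : ℕ) :
    ∃ C : ℝ, 1 ≤ C ∧ ∀ m ≤ M, ∀ (f : ℝ → ℝ) (g₁ g₂ : E → ℝ) (a D : ℕ → ℝ),
    ContDiff ℝ ((m + 2 : ℕ)) f →
    (∀ k, 1 ≤ k → k ≤ m + 2 → ∀ t, |iteratedDeriv k f t| ≤ 1) →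
    ContDiff ℝ (m : ℕ) g₁ → ContDiff ℝ (m : ℕ) g₂ →
    (∀ j, 1 ≤ j → j ≤ m → ∀ x, ‖iteratedFDeriv ℝ j g₁ x‖ ≤ a j ∧ ‖iteratedFDeriv ℝ j g₂ x‖ ≤ a j) →
    (∀ j, 0 ≤ a j) →
    (∀ j, 1 ≤ j → j + 2 ≤ m → a (j + 1) ^ 2 ≤ 8 * (a j * a (j + 2))) →
    (∀ n, n ≤ m → ∀ x, ‖iteratedFDeriv ℝ n (fun y => g₁ y - g₂ y) x‖ ≤ D n) →
    (∀ n, 0 ≤ D n) →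
    ∀ x, ‖iteratedFDeriv ℝ m (fun y => f (g₁ y) - f (g₂ y)) x‖ ≤
      C * ∑ n ∈ Finset.range (m + 1),
        D n * (if m - n = 0 then (1:ℝ) else a 1 ^ (m - n) + a (m - n)) := by
  induction M with
  | zero =>
    refine ⟨1, le_rfl, ?_⟩
    intro m hm f g₁ g₂ a D hf hfb hg₁ hg₂ hab ha h3 hD hD0 x
    have hm0 : m = 0 := by omega
    subst hm0
    rw [Finset.sum_range_one, norm_iteratedFDeriv_zero, Real.norm_eq_abs]
    have hfdiff : Differentiable ℝ f := hf.differentiable (by simp)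
    have hb : ∀ t ∈ (Set.univ : Set ℝ), ‖deriv f t‖ ≤ 1 := by
      intro t _
      rw [Real.norm_eq_abs, ← iteratedDeriv_one]
      exact hfb 1 (by norm_num) (by norm_num) t
    have hmvt := Convex.norm_image_sub_le_of_norm_deriv_le (fun t _ => (hfdiff t))
      hb convex_univ (Set.mem_univ (g₂ x)) (Set.mem_univ (g₁ x))
    have hD0x : |g₁ x - g₂ x| ≤ D 0 := by
      have := hD 0 (by omega) x
      rwa [norm_iteratedFDeriv_zero, Real.norm_eq_abs] at this
    simp only [Real.norm_eq_abs, one_mul] at hmvt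
    norm_num
    linarith
  | succ M IH =>
    obtain ⟨C0, hC0, hIH⟩ := IH
    obtain ⟨CT, hCT, hT⟩ := cdb_seqT (M + 1)
    obtain ⟨CC, hCC, hComp⟩ := cdb_comp (E := E) M
    refine ⟨(2:ℝ) ^ M * C0 * (2 * CT) + 2 ^ M * CC + C0, ?_, ?_⟩
    · have h1 : (0:ℝ) ≤ (2:ℝ) ^ M * C0 * (2 * CT) := by positivity
      have h2 : (0:ℝ) ≤ (2:ℝ) ^ M * CC := by positivity
      linarith
    intro m hm f g₁ g₂ a D hf hfb hg₁ hg₂ hab ha h3 hD hD0 x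
    -- nonnegativity of the sum
    have hco : ∀ n : ℕ, (0:ℝ) ≤ (if m - n = 0 then (1:ℝ) else a 1 ^ (m - n) + a (m - n)) := by
      intro n
      split
      · norm_num
      · exact add_nonneg (pow_nonneg (ha 1) _) (ha _)
    have hS0 : (0:ℝ) ≤ ∑ n ∈ Finset.range (m + 1),
        D n * (if m - n = 0 then (1:ℝ) else a 1 ^ (m - n) + a (m - n)) :=
      Finset.sum_nonneg fun n _ => mul_nonneg (hD0 n) (hco n)
    rcases Nat.lt_or_ge m (M + 1) with hlt | hge
    · refine (hIH m (by omega) f g₁ g₂ a D hf hfb hg₁ hg₂ hab ha h3 hD hD0 x).trans ?_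
      refine mul_le_mul_of_nonneg_right ?_ hS0
      have h1 : (0:ℝ) ≤ (2:ℝ) ^ M * C0 * (2 * CT) := by positivity
      have h2 : (0:ℝ) ≤ (2:ℝ) ^ M * CC := by positivity
      linarith
    · have hmM : m = M + 1 := by omega
      subst hmM
      -- abbreviations
      set S : ℝ := ∑ n ∈ Finset.range (M + 1 + 1),
        D n * (if M + 1 - n = 0 then (1:ℝ) else a 1 ^ (M + 1 - n) + a (M + 1 - n)) with hSdef
      -- smoothness facts
      have hf' : ContDiff ℝ (((M + 2 : ℕ) : WithTop ℕ∞) + 1) f := by exact_mod_cast hf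
      have hfd : ContDiff ℝ ((M + 2 : ℕ)) (deriv f) := (contDiff_succ_iff_deriv.mp hf').2.2
      have hfdiff : Differentiable ℝ f :=
        hf.differentiable (by simp)
      have hg₁d : Differentiable ℝ g₁ :=
        hg₁.differentiable (by simp)
      have hg₂d : Differentiable ℝ g₂ :=
        hg₂.differentiable (by simp)
      have hgsub : ContDiff ℝ ((M + 1 : ℕ)) (fun y => g₁ y - g₂ y) := hg₁.sub hg₂
      have hMle : ((M : ℕ) : WithTop ℕ∞) ≤ ((M + 1 : ℕ) : WithTop ℕ∞) := by
        exact_mod_cast Nat.le_succ M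
      have hF₁ : ContDiff ℝ ((M : ℕ)) (fderiv ℝ g₁) :=
        hg₁.fderiv_right (m := (M : ℕ∞)) (by exact_mod_cast le_rfl)
      have hFsub : ContDiff ℝ ((M : ℕ)) (fderiv ℝ (fun y => g₁ y - g₂ y)) :=
        hgsub.fderiv_right (m := (M : ℕ∞)) (by exact_mod_cast le_rfl)
      have hfdM : ContDiff ℝ ((M : ℕ)) (deriv f) :=
        hfd.of_le (by exact_mod_cast (by omega : M ≤ M + 2))
      have hφ₁ : ContDiff ℝ ((M : ℕ)) (fun y => deriv f (g₁ y)) := hfdM.comp (hg₁.of_le hMle)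
      have hφ₂ : ContDiff ℝ ((M : ℕ)) (fun y => deriv f (g₂ y)) := hfdM.comp (hg₂.of_le hMle)
      have hφd : ContDiff ℝ ((M : ℕ)) (fun y => deriv f (g₁ y) - deriv f (g₂ y)) := hφ₁.sub hφ₂
      have hT₁ : ContDiff ℝ ((M : ℕ))
          (fun y => (deriv f (g₁ y) - deriv f (g₂ y)) • fderiv ℝ g₁ y) := hφd.smul hF₁
      have hT₂ : ContDiff ℝ ((M : ℕ))
          (fun y => deriv f (g₂ y) • fderiv ℝ (fun z => g₁ z - g₂ z) y) := hφ₂.smul hFsub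
      -- the derivative identity
      have hder : fderiv ℝ (fun y => f (g₁ y) - f (g₂ y)) =
          (fun y => (deriv f (g₁ y) - deriv f (g₂ y)) • fderiv ℝ g₁ y) +
          (fun y => deriv f (g₂ y) • fderiv ℝ (fun z => g₁ z - g₂ z) y) := by
        funext y
        have hd1 : HasFDerivAt (fun y => f (g₁ y)) (deriv f (g₁ y) • fderiv ℝ g₁ y) y :=
          ((hfdiff (g₁ y)).hasDerivAt).comp_hasFDerivAt y (hg₁d y).hasFDerivAt
        have hd2 : HasFDerivAt (fun y => f (g₂ y)) (deriv f (g₂ y) • fderiv ℝ g₂ y) y :=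
          ((hfdiff (g₂ y)).hasDerivAt).comp_hasFDerivAt y (hg₂d y).hasFDerivAt
        have hsub : fderiv ℝ (fun z => g₁ z - g₂ z) y = fderiv ℝ g₁ y - fderiv ℝ g₂ y :=
          ((hg₁d y).hasFDerivAt.sub (hg₂d y).hasFDerivAt).fderiv
        rw [HasFDerivAt.fderiv (f := fun y => f (g₁ y) - f (g₂ y)) (hd1.sub hd2)]
        simp only [Pi.add_apply]
        rw [hsub, sub_smul, smul_sub]
        abel
      -- reduce to order M
      rw [← norm_iteratedFDeriv_fderiv, hder, iteratedFDeriv_add_apply hT₁.contDiffAt hT₂.contDiffAt]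
      refine (norm_add_le _ _).trans ?_
      -- Term 1
      have hterm1 : ‖iteratedFDeriv ℝ M
          (fun y => (deriv f (g₁ y) - deriv f (g₂ y)) • fderiv ℝ g₁ y) x‖
          ≤ (2:ℝ) ^ M * C0 * (2 * CT) * S := by
        refine (norm_iteratedFDeriv_smul_le hφd hF₁ x (le_refl ((M : ℕ) : WithTop ℕ∞))).trans ?_
        have hterm : ∀ l ∈ Finset.range (M + 1),
            (M.choose l : ℝ) * ‖iteratedFDeriv ℝ l (fun y => deriv f (g₁ y) - deriv f (g₂ y)) x‖ *
              ‖iteratedFDeriv ℝ (M - l) (fderiv ℝ g₁) x‖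
            ≤ (M.choose l : ℝ) * (C0 * (2 * CT) * S) := by
          intro l hl
          have hlM : l ≤ M := by
            have := Finset.mem_range.mp hl
            omega
          -- first factor via the inductive hypothesis at level l
          have hf1 : ‖iteratedFDeriv ℝ l (fun y => deriv f (g₁ y) - deriv f (g₂ y)) x‖ ≤
              C0 * ∑ n ∈ Finset.range (l + 1),
                D n * (if l - n = 0 then (1:ℝ) else a 1 ^ (l - n) + a (l - n)) := by
            refine hIH l hlM (deriv f) g₁ g₂ a D
              (hfd.of_le (by exact_mod_cast (by omega : l + 2 ≤ M + 2))) ?_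
              (hg₁.of_le (by exact_mod_cast (by omega : l ≤ M + 1)))
              (hg₂.of_le (by exact_mod_cast (by omega : l ≤ M + 1)))
              (fun j hj1 hj2 => hab j hj1 (by omega)) ha
              (fun j hj1 hj2 => h3 j hj1 (by omega))
              (fun n hn => hD n (by omega)) hD0 x
            intro k hk1 hk2 t
            have := hfb (k + 1) (by omega) (by omega) t
            rwa [iteratedDeriv_succ'] at this
          -- second factor
          have hf2 : ‖iteratedFDeriv ℝ (M - l) (fderiv ℝ g₁) x‖ ≤ a (M + 1 - l) := by
            rw [norm_iteratedFDeriv_fderiv]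
            have e : M - l + 1 = M + 1 - l := by omega
            rw [e]
            exact (hab (M + 1 - l) (by omega) (by omega) x).1
          -- product estimate for the sums
          have hinner : (∑ n ∈ Finset.range (l + 1),
              D n * (if l - n = 0 then (1:ℝ) else a 1 ^ (l - n) + a (l - n))) * a (M + 1 - l)
              ≤ 2 * CT * S := by
            rw [Finset.sum_mul]
            have hstep : ∀ n ∈ Finset.range (l + 1),
                D n * (if l - n = 0 then (1:ℝ) else a 1 ^ (l - n) + a (l - n)) * a (M + 1 - l)
                ≤ 2 * CT * (D n * (if M + 1 - n = 0 then (1:ℝ)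
                    else a 1 ^ (M + 1 - n) + a (M + 1 - n))) := by
              intro n hn
              have hnl : n ≤ l := by
                have := Finset.mem_range.mp hn
                omega
              have hq1 : 1 ≤ M + 1 - l := by omega
              have hpq : (l - n) + (M + 1 - l) = M + 1 - n := by omega
              have hne : ¬ (M + 1 - n = 0) := by omega
              rw [if_neg hne]
              have hkey : (if l - n = 0 then (1:ℝ) else a 1 ^ (l - n) + a (l - n)) * a (M + 1 - l)
                  ≤ 2 * CT * (a 1 ^ (M + 1 - n) + a (M + 1 - n)) := by
                rcases Nat.eq_zero_or_pos (l - n) with hz | hpos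
                · rw [if_pos hz, one_mul]
                  have e2 : M + 1 - l = M + 1 - n := by omega
                  rw [e2]
                  have h5 : a (M + 1 - n) ≤ a 1 ^ (M + 1 - n) + a (M + 1 - n) :=
                    le_add_of_nonneg_left (pow_nonneg (ha 1) _)
                  have h6 : (0:ℝ) ≤ a 1 ^ (M + 1 - n) + a (M + 1 - n) :=
                    add_nonneg (pow_nonneg (ha 1) _) (ha _)
                  nlinarith
                · rw [if_neg (by omega)]
                  have h1 := (hT a ha (fun j hj1 hj2 => h3 j hj1 (by omega)) (l - n) (M + 1 - l)
                    hq1 (by omega)).1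
                  have h2 := (hT a ha (fun j hj1 hj2 => h3 j hj1 (by omega)) (l - n) (M + 1 - l)
                    hq1 (by omega)).2 hpos
                  rw [hpq] at h1 h2
                  calc (a 1 ^ (l - n) + a (l - n)) * a (M + 1 - l)
                      = a 1 ^ (l - n) * a (M + 1 - l) + a (l - n) * a (M + 1 - l) := by ring
                    _ ≤ CT * (a 1 ^ (M + 1 - n) + a (M + 1 - n))
                        + CT * (a 1 ^ (M + 1 - n) + a (M + 1 - n)) := add_le_add h1 h2
                    _ = 2 * CT * (a 1 ^ (M + 1 - n) + a (M + 1 - n)) := by ring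
              calc D n * (if l - n = 0 then (1:ℝ) else a 1 ^ (l - n) + a (l - n)) * a (M + 1 - l)
                  = D n * ((if l - n = 0 then (1:ℝ) else a 1 ^ (l - n) + a (l - n)) * a (M + 1 - l)) := by
                    ring
                _ ≤ D n * (2 * CT * (a 1 ^ (M + 1 - n) + a (M + 1 - n))) :=
                    mul_le_mul_of_nonneg_left hkey (hD0 n)
                _ = 2 * CT * (D n * (a 1 ^ (M + 1 - n) + a (M + 1 - n))) := by ring
            refine (Finset.sum_le_sum hstep).trans ?_
            rw [← Finset.mul_sum]
            refine mul_le_mul_of_nonneg_left ?_ (by positivity)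
            refine Finset.sum_le_sum_of_subset_of_nonneg ?_ ?_
            · intro t ht
              simp only [Finset.mem_range] at *
              omega
            · intro n _ _
              exact mul_nonneg (hD0 n) (hco n)
          calc (M.choose l : ℝ) * ‖iteratedFDeriv ℝ l (fun y => deriv f (g₁ y) - deriv f (g₂ y)) x‖ *
                ‖iteratedFDeriv ℝ (M - l) (fderiv ℝ g₁) x‖
              ≤ (M.choose l : ℝ) * (C0 * ∑ n ∈ Finset.range (l + 1),
                  D n * (if l - n = 0 then (1:ℝ) else a 1 ^ (l - n) + a (l - n))) * a (M + 1 - l) := by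
                refine mul_le_mul ?_ hf2 (norm_nonneg _) ?_
                · exact mul_le_mul_of_nonneg_left hf1 (by positivity)
                · have hsum0 : (0:ℝ) ≤ ∑ n ∈ Finset.range (l + 1),
                      D n * (if l - n = 0 then (1:ℝ) else a 1 ^ (l - n) + a (l - n)) := by
                    refine Finset.sum_nonneg fun n _ => mul_nonneg (hD0 n) ?_
                    split
                    · norm_num
                    · exact add_nonneg (pow_nonneg (ha 1) _) (ha _)
                  positivity
            _ = (M.choose l : ℝ) * C0 * ((∑ n ∈ Finset.range (l + 1),
                  D n * (if l - n = 0 then (1:ℝ) else a 1 ^ (l - n) + a (l - n))) * a (M + 1 - l)) := by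
                ring
            _ ≤ (M.choose l : ℝ) * C0 * (2 * CT * S) := by
                refine mul_le_mul_of_nonneg_left hinner (by positivity)
            _ = (M.choose l : ℝ) * (C0 * (2 * CT) * S) := by ring
        refine (Finset.sum_le_sum hterm).trans ?_
        rw [← Finset.sum_mul, ← Nat.cast_sum, Nat.sum_range_choose]
        push_cast
        calc (2:ℝ) ^ M * (C0 * (2 * CT) * S) = (2:ℝ) ^ M * C0 * (2 * CT) * S := by ring
          _ ≤ (2:ℝ) ^ M * C0 * (2 * CT) * S := le_rfl
      -- Term 2
      have hterm2 : ‖iteratedFDeriv ℝ M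
          (fun y => deriv f (g₂ y) • fderiv ℝ (fun z => g₁ z - g₂ z) y) x‖
          ≤ (2:ℝ) ^ M * CC * S := by
        refine (norm_iteratedFDeriv_smul_le hφ₂ hFsub x (le_refl ((M : ℕ) : WithTop ℕ∞))).trans ?_
        have hterm : ∀ l ∈ Finset.range (M + 1),
            (M.choose l : ℝ) * ‖iteratedFDeriv ℝ l (fun y => deriv f (g₂ y)) x‖ *
              ‖iteratedFDeriv ℝ (M - l) (fderiv ℝ (fun z => g₁ z - g₂ z)) x‖
            ≤ (M.choose l : ℝ) * (CC * S) := by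
          intro l hl
          have hlM : l ≤ M := by
            have := Finset.mem_range.mp hl
            omega
          have hf1 : ‖iteratedFDeriv ℝ l (fun y => deriv f (g₂ y)) x‖ ≤
              CC * (if l = 0 then (1:ℝ) else a 1 ^ l + a l) := by
            refine hComp l hlM (deriv f) g₂ a
              (hfdM.of_le (by exact_mod_cast hlM)) ?_
              ((hg₂.of_le hMle).of_le (by exact_mod_cast hlM))
              (fun j hj1 hj2 x => (hab j hj1 (by omega) x).2)
              ha (fun j hj1 hj2 => h3 j hj1 (by omega)) x
            intro j hj t
            have := hfb (j + 1) (by omega) (by omega) t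
            rwa [iteratedDeriv_succ'] at this
          have hf2 : ‖iteratedFDeriv ℝ (M - l) (fderiv ℝ (fun z => g₁ z - g₂ z)) x‖
              ≤ D (M + 1 - l) := by
            rw [norm_iteratedFDeriv_fderiv]
            have e : M - l + 1 = M + 1 - l := by omega
            rw [e]
            exact hD (M + 1 - l) (by omega) x
          have hsingle : (if l = 0 then (1:ℝ) else a 1 ^ l + a l) * D (M + 1 - l) ≤ S := by
            have hmem : M + 1 - l ∈ Finset.range (M + 1 + 1) := by
              simp only [Finset.mem_range]
              omega
            have hco' : (if M + 1 - (M + 1 - l) = 0 then (1:ℝ)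
                else a 1 ^ (M + 1 - (M + 1 - l)) + a (M + 1 - (M + 1 - l)))
                = (if l = 0 then (1:ℝ) else a 1 ^ l + a l) := by
              have e : M + 1 - (M + 1 - l) = l := by omega
              rw [e]
            have h7 := Finset.single_le_sum (f := fun n => D n *
                (if M + 1 - n = 0 then (1:ℝ) else a 1 ^ (M + 1 - n) + a (M + 1 - n)))
              (fun n _ => mul_nonneg (hD0 n) (hco n)) hmem
            rw [hco'] at h7
            calc (if l = 0 then (1:ℝ) else a 1 ^ l + a l) * D (M + 1 - l)
                = D (M + 1 - l) * (if l = 0 then (1:ℝ) else a 1 ^ l + a l) := by ring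
              _ ≤ S := by rw [hSdef]; exact h7
          calc (M.choose l : ℝ) * ‖iteratedFDeriv ℝ l (fun y => deriv f (g₂ y)) x‖ *
                ‖iteratedFDeriv ℝ (M - l) (fderiv ℝ (fun z => g₁ z - g₂ z)) x‖
              ≤ (M.choose l : ℝ) * (CC * (if l = 0 then (1:ℝ) else a 1 ^ l + a l)) * D (M + 1 - l) := by
                refine mul_le_mul ?_ hf2 (norm_nonneg _) ?_
                · exact mul_le_mul_of_nonneg_left hf1 (by positivity)
                · have h0 : (0:ℝ) ≤ (if l = 0 then (1:ℝ) else a 1 ^ l + a l) := by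
                    split
                    · norm_num
                    · exact add_nonneg (pow_nonneg (ha 1) _) (ha l)
                  positivity
            _ = (M.choose l : ℝ) * CC * ((if l = 0 then (1:ℝ) else a 1 ^ l + a l) * D (M + 1 - l)) := by
                ring
            _ ≤ (M.choose l : ℝ) * CC * S := mul_le_mul_of_nonneg_left hsingle (by positivity)
            _ = (M.choose l : ℝ) * (CC * S) := by ring
        refine (Finset.sum_le_sum hterm).trans ?_
        rw [← Finset.sum_mul, ← Nat.cast_sum, Nat.sum_range_choose]
        push_cast
        calc (2:ℝ) ^ M * (CC * S) = (2:ℝ) ^ M * CC * S := by ring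
          _ ≤ (2:ℝ) ^ M * CC * S := le_rfl
      have hSS : (0:ℝ) ≤ S := hS0
      calc ‖iteratedFDeriv ℝ M
            (fun y => (deriv f (g₁ y) - deriv f (g₂ y)) • fderiv ℝ g₁ y) x‖ +
          ‖iteratedFDeriv ℝ M
            (fun y => deriv f (g₂ y) • fderiv ℝ (fun z => g₁ z - g₂ z) y) x‖
          ≤ (2:ℝ) ^ M * C0 * (2 * CT) * S + (2:ℝ) ^ M * CC * S := add_le_add hterm1 hterm2
        _ ≤ ((2:ℝ) ^ M * C0 * (2 * CT) + 2 ^ M * CC + C0) * S := by nlinarith [hC0, hSS]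

/-- Lipschitz-type bound on the `m`-th derivative of a difference of
compositions: `‖∇^m (f∘g₁ − f∘g₂)‖_∞ ≲ Σ_{n=0}^m ‖∇^n(g₁−g₂)‖_∞ (M₁^{m−n} + M_{m−n})`. -/
theorem composition_difference_derivative_bound
    (d m : ℕ) (hd : 1 ≤ d) :
    ∃ C : ℝ, 0 < C ∧
      ∀ (f : ℝ → ℝ) (c : ℕ → ℝ),
        ContDiff ℝ (m + 2) f →
        (∀ k ∈ Finset.Icc 1 (m + 2), ∀ x : ℝ, |iteratedDeriv k f x| ≤ c k) →
        (∑ k ∈ Finset.Icc 1 (m + 2), c k) ≤ 1 →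
        ∀ (g₁ g₂ : EuclideanSpace ℝ (Fin d) → ℝ) (M D : ℕ → ℝ),
          ContDiff ℝ m g₁ → ContDiff ℝ m g₂ →
          (∀ j ≤ m, ∀ x,
            ‖iteratedFDeriv ℝ j g₁ x‖ ≤ M j ∧ ‖iteratedFDeriv ℝ j g₂ x‖ ≤ M j) →
          (∀ n ≤ m, ∀ x, ‖iteratedFDeriv ℝ n (fun y => g₁ y - g₂ y) x‖ ≤ D n) →
          ∀ x, ‖iteratedFDeriv ℝ m (fun y => f (g₁ y) - f (g₂ y)) x‖ ≤
              C * ∑ n ∈ Finset.range (m + 1), D n * (M 1 ^ (m - n) + M (m - n)) := by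
  obtain ⟨C, hC1, hDiff⟩ := cdb_diff (E := EuclideanSpace ℝ (Fin d)) m
  refine ⟨C, by linarith, ?_⟩
  intro f c hf hfc hsum g₁ g₂ M D hg₁ hg₂ hM hD x
  -- individual derivative bounds on f
  have hc0 : ∀ k ∈ Finset.Icc 1 (m + 2), (0:ℝ) ≤ c k :=
    fun k hk => (abs_nonneg _).trans (hfc k hk 0)
  have hfb : ∀ k, 1 ≤ k → k ≤ m + 2 → ∀ t, |iteratedDeriv k f t| ≤ 1 := by
    intro k h1 h2 t
    refine (hfc k (Finset.mem_Icc.mpr ⟨h1, h2⟩) t).trans ?_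
    exact le_trans (Finset.single_le_sum hc0 (Finset.mem_Icc.mpr ⟨h1, h2⟩)) hsum
  -- the sequence of true sup norms
  set a : ℕ → ℝ := fun j => max (⨆ y, ‖iteratedFDeriv ℝ j g₁ y‖)
      (⨆ y, ‖iteratedFDeriv ℝ j g₂ y‖) with hadef
  have ha0 : ∀ j, 0 ≤ a j :=
    fun j => le_trans (Real.iSup_nonneg fun y => norm_nonneg _) (le_max_left _ _)
  have hbdd1 : ∀ j, j ≤ m → BddAbove (Set.range fun y => ‖iteratedFDeriv ℝ j g₁ y‖) := by
    intro j hj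
    exact ⟨M j, by rintro _ ⟨y, rfl⟩; exact (hM j hj y).1⟩
  have hbdd2 : ∀ j, j ≤ m → BddAbove (Set.range fun y => ‖iteratedFDeriv ℝ j g₂ y‖) := by
    intro j hj
    exact ⟨M j, by rintro _ ⟨y, rfl⟩; exact (hM j hj y).2⟩
  have hab : ∀ j, j ≤ m → ∀ y, ‖iteratedFDeriv ℝ j g₁ y‖ ≤ a j ∧
      ‖iteratedFDeriv ℝ j g₂ y‖ ≤ a j := by
    intro j hj y
    constructor
    · exact le_trans (le_ciSup (hbdd1 j hj) y) (le_max_left _ _)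
    · exact le_trans (le_ciSup (hbdd2 j hj) y) (le_max_right _ _)
  have haM : ∀ j, j ≤ m → a j ≤ M j := by
    intro j hj
    exact max_le (ciSup_le fun y => (hM j hj y).1) (ciSup_le fun y => (hM j hj y).2)
  -- the Landau three-term inequality for `a`
  have h3 : ∀ j, 1 ≤ j → j + 2 ≤ m → a (j + 1) ^ 2 ≤ 8 * (a j * a (j + 2)) := by
    intro j hj1 hj2
    have hz : (0:ℝ) ≤ 8 * (a j * a (j + 2)) := by
      have := mul_nonneg (ha0 j) (ha0 (j + 2))
      linarith
    have key₁ := cdb_landauE (h := g₁) (n := j) (A := a j) (B := a (j + 2))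
      (hg₁.of_le (by exact_mod_cast hj2)) (fun y => (hab j (by omega) y).1)
      (fun y => (hab (j + 2) (by omega) y).1)
    have key₂ := cdb_landauE (h := g₂) (n := j) (A := a j) (B := a (j + 2))
      (hg₂.of_le (by exact_mod_cast hj2)) (fun y => (hab j (by omega) y).2)
      (fun y => (hab (j + 2) (by omega) y).2)
    have hsup : a (j + 1) ≤ Real.sqrt (8 * (a j * a (j + 2))) :=
      max_le (ciSup_le fun y => key₁ y) (ciSup_le fun y => key₂ y)
    calc a (j + 1) ^ 2 ≤ Real.sqrt (8 * (a j * a (j + 2))) ^ 2 :=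
          pow_le_pow_left₀ (ha0 _) hsup 2
      _ = 8 * (a j * a (j + 2)) := Real.sq_sqrt hz
  -- truncated difference bounds
  set D' : ℕ → ℝ := fun n => if n ≤ m then D n else 0 with hD'def
  have hD' : ∀ n, n ≤ m → ∀ y, ‖iteratedFDeriv ℝ n (fun y => g₁ y - g₂ y) y‖ ≤ D' n := by
    intro n hn y
    rw [hD'def]
    simp only [if_pos hn]
    exact hD n hn y
  have hD0' : ∀ n, 0 ≤ D' n := by
    intro n
    rw [hD'def]
    dsimp only
    split
    · exact (norm_nonneg _).trans (hD n (by assumption) x)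
    · exact le_rfl
  -- apply the main lemma
  have hfcast : ContDiff ℝ ((m + 2 : ℕ)) f := by exact_mod_cast hf
  have main := hDiff m le_rfl f g₁ g₂ a D' hfcast hfb hg₁ hg₂
    (fun j hj1 hj2 y => hab j hj2 y) ha0 h3 hD' hD0' x
  refine main.trans ?_
  refine mul_le_mul_of_nonneg_left ?_ (by linarith)
  refine Finset.sum_le_sum ?_
  intro n hn
  have hnm : n ≤ m := by
    have := Finset.mem_range.mp hn
    omega
  have hDn : D' n = D n := by rw [hD'def]; simp [if_pos hnm]
  rw [hDn]
  refine mul_le_mul_of_nonneg_left ?_ ((norm_nonneg _).trans (hD n hnm x))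
  rcases Nat.eq_zero_or_pos (m - n) with hz | hpos
  · rw [if_pos hz, hz]
    have hM0 : (0:ℝ) ≤ M 0 := (norm_nonneg _).trans (hM 0 (by omega) x).1
    rw [pow_zero]
    linarith
  · rw [if_neg (by omega)]
    have h1m : (1:ℕ) ≤ m := by omega
    refine add_le_add ?_ (haM (m - n) (by omega))
    exact pow_le_pow_left₀ (ha0 1) (haM 1 h1m) _
end

section
/- Let d, N ≥ 1 be integers and ν ∈ (0, 1/2). Let g : ℝ^d → ℝ^N be continuously differentiable with [g]_{Ċ^{1−ν}} < ∞ and [∇g]_{Ċ^{ν}} < ∞. For α ∈ ℝ^d \ {0} define the second-difference quotient 𝒪_α g(x) := (2g(x) − g(x+α) − g(x−α)) / |α|. Then there is a constant C depending only on d and ν such that ∫_{ℝ^d} ( sup_x ‖𝒪_α g(x)‖ ) · dα / |α|^d ≤ C ( [∇g]_{Ċ^{ν}} )^{1/2} ( [g]_{Ċ^{1−ν}} )^{1/2}. -/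
set_option maxHeartbeats 1000000

open MeasureTheory Set Metric

section AuxIntegrable

variable {E : Type*} [NormedAddCommGroup E] [NormedSpace ℝ E] [MeasurableSpace E] [BorelSpace E]
  [Nontrivial E] [FiniteDimensional ℝ E]

/-- Integrability transfer for radial functions, an integrability analogue of
`MeasureTheory.integral_fun_norm_addHaar`. -/
lemma aux_integrable_fun_norm (μ : Measure E) [μ.IsAddHaarMeasure]
    {f : ℝ → ℝ} (hmeas : Measurable f)
    (hf : IntegrableOn (fun y => y ^ (Module.finrank ℝ E - 1) * f y) (Ioi (0:ℝ))) :
    Integrable (fun x => f ‖x‖) μ := by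
  set n := Module.finrank ℝ E - 1 with hn
  have h1 : Integrable ((fun y : ℝ => y ^ n * f y) ∘ (Subtype.val : Ioi (0:ℝ) → ℝ))
      (volume.comap Subtype.val) := by
    rw [← MeasurableEmbedding.integrable_map_iff
      (MeasurableEmbedding.subtype_coe measurableSet_Ioi),
      map_comap_subtype_coe measurableSet_Ioi]
    exact hf
  have h2 : Integrable (fun r : Ioi (0:ℝ) => f r) (Measure.volumeIoiPow n) := by
    rw [Measure.volumeIoiPow,
      integrable_withDensity_iff_integrable_smul'
        ((measurable_subtype_coe.pow_const n).ennreal_ofReal)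
        (Filter.Eventually.of_forall fun r => ENNReal.ofReal_lt_top)]
    refine h1.congr (Filter.Eventually.of_forall fun r => ?_)
    have hr : (0:ℝ) ≤ (r : ℝ) := le_of_lt r.2
    simp [Function.comp, smul_eq_mul, ENNReal.toReal_ofReal (pow_nonneg hr n)]
  have h3 : Integrable (fun p : sphere (0:E) 1 × Ioi (0:ℝ) => f p.2)
      ((μ.toSphere).prod (Measure.volumeIoiPow n)) := by
    have h4 : Integrable (fun r : Ioi (0:ℝ) => f r)
        ((μ.toSphere Set.univ) • (Measure.volumeIoiPow n)) :=
      h2.smul_measure (measure_ne_top _ _)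
    rw [← Measure.map_snd_prod] at h4
    exact (integrable_map_measure
      ((hmeas.comp measurable_subtype_coe).aestronglyMeasurable)
      measurable_snd.aemeasurable).1 h4
  have h5 : Integrable ((fun p : sphere (0:E) 1 × Ioi (0:ℝ) => f p.2) ∘
      (homeomorphUnitSphereProd E)) (μ.comap Subtype.val) :=
    (μ.measurePreserving_homeomorphUnitSphereProd.integrable_comp_emb
      (Homeomorph.measurableEmbedding _)).2 h3
  have h6 : Integrable (fun x : E => f ‖x‖) (μ.restrict {(0:E)}ᶜ) := by
    rw [← map_comap_subtype_coe (measurableSet_singleton (0:E)).compl,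
      MeasurableEmbedding.integrable_map_iff (MeasurableEmbedding.subtype_coe
        (measurableSet_singleton (0:E)).compl)]
    refine h5.congr (Filter.Eventually.of_forall fun x => ?_)
    simp [Function.comp, homeomorphUnitSphereProd_apply_snd_coe]
  rwa [restrict_compl_singleton] at h6

end AuxIntegrable

/-- Integral bound for second-difference quotients:
`∫ (sup_x ‖𝒪_α g(x)‖) dα/|α|^d ≲ [∇g]_{Ċ^ν}^{1/2} [g]_{Ċ^{1−ν}}^{1/2}`. -/
theorem second_difference_integral_bound
    (d N : ℕ) (hd : 1 ≤ d) (hN : 1 ≤ N) (ν : ℝ) (hν : ν ∈ Ioo (0 : ℝ) (1 / 2)) :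
    ∃ C : ℝ, 0 < C ∧
      ∀ (g : EuclideanSpace ℝ (Fin d) → EuclideanSpace ℝ (Fin N)) (K₁ K₂ : ℝ),
        ContDiff ℝ 1 g →
        (∀ x y, ‖g x - g y‖ ≤ K₁ * ‖x - y‖ ^ (1 - ν)) →
        (∀ x y, ‖fderiv ℝ g x - fderiv ℝ g y‖ ≤ K₂ * ‖x - y‖ ^ ν) →
        (∫ α : EuclideanSpace ℝ (Fin d),
            (⨆ x, ‖(2 : ℝ) • g x - g (x + α) - g (x - α)‖ / ‖α‖) / ‖α‖ ^ d) ≤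
          C * Real.sqrt K₂ * Real.sqrt K₁ := by
  obtain ⟨hν0, hν2⟩ := hν
  set E := EuclideanSpace ℝ (Fin d) with hE
  haveI : Nonempty (Fin d) := ⟨⟨0, hd⟩⟩
  haveI : Nontrivial E := by
    refine ⟨EuclideanSpace.single ⟨0, hd⟩ (1:ℝ), 0, fun h => ?_⟩
    have := congrArg (fun v : E => v ⟨0, hd⟩) h
    simp only at this
    rw [EuclideanSpace.single_apply, if_pos rfl] at this
    exact one_ne_zero (this.trans rfl)
  set V : ℝ := (volume (ball (0:E) 1)).toReal with hV
  have hVnonneg : 0 ≤ V := ENNReal.toReal_nonneg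
  set C : ℝ := (d : ℝ) * V * 4 / ν + 1 with hC
  have hCnonneg : (0:ℝ) ≤ (d : ℝ) * V * 4 / ν := by
    apply div_nonneg _ hν0.le
    positivity
  refine ⟨C, by show (0:ℝ) < (d : ℝ) * V * 4 / ν + 1; linarith, ?_⟩
  intro g K₁ K₂ hg hK1 hK2
  have hdim : Module.finrank ℝ E = d := finrank_euclideanSpace_fin
  -- nonnegativity of the constants
  obtain ⟨x₀, y₀, hxy⟩ := exists_pair_ne E
  have hx₀y₀ : (0:ℝ) < ‖x₀ - y₀‖ := by
    rw [norm_pos_iff, sub_ne_zero]; exact hxy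
  have hK1n : 0 ≤ K₁ := by
    have h := hK1 x₀ y₀
    have h2 : (0:ℝ) < ‖x₀ - y₀‖ ^ (1 - ν) := Real.rpow_pos_of_pos hx₀y₀ _
    nlinarith [norm_nonneg (g x₀ - g y₀)]
  have hK2n : 0 ≤ K₂ := by
    have h := hK2 x₀ y₀
    have h2 : (0:ℝ) < ‖x₀ - y₀‖ ^ ν := Real.rpow_pos_of_pos hx₀y₀ _
    nlinarith [norm_nonneg (fderiv ℝ g x₀ - fderiv ℝ g y₀)]
  -- the integrand is nonnegative
  set f : E → ℝ := fun α => (⨆ x, ‖(2 : ℝ) • g x - g (x + α) - g (x - α)‖ / ‖α‖) / ‖α‖ ^ d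
    with hf_def
  have hf_nonneg : ∀ α, 0 ≤ f α := fun α =>
    div_nonneg (Real.iSup_nonneg fun x => div_nonneg (norm_nonneg _) (norm_nonneg _))
      (by positivity)
  -- pointwise bounds
  have boundA : ∀ (α : E), α ≠ 0 → ∀ x : E,
      ‖(2 : ℝ) • g x - g (x + α) - g (x - α)‖ / ‖α‖ ≤ 2 * (K₁ * ‖α‖ ^ (-ν)) := by
    intro α hα x
    have hpos : (0:ℝ) < ‖α‖ := norm_pos_iff.2 hα
    rw [div_le_iff₀ hpos]
    have e1 : ‖g x - g (x + α)‖ ≤ K₁ * ‖α‖ ^ (1 - ν) := by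
      have := hK1 x (x + α)
      simpa [sub_add_cancel_left] using this
    have e2 : ‖g x - g (x - α)‖ ≤ K₁ * ‖α‖ ^ (1 - ν) := by
      have := hK1 x (x - α)
      simpa [sub_sub_cancel] using this
    have e3 : ‖(2 : ℝ) • g x - g (x + α) - g (x - α)‖ ≤
        ‖g x - g (x + α)‖ + ‖g x - g (x - α)‖ := by
      have heq : (2 : ℝ) • g x - g (x + α) - g (x - α)
          = (g x - g (x + α)) + (g x - g (x - α)) := by
        rw [two_smul]; abel
      rw [heq]; exact norm_add_le _ _
    have e4 : 2 * (K₁ * ‖α‖ ^ (-ν)) * ‖α‖ = 2 * (K₁ * ‖α‖ ^ (1 - ν)) := by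
      have : ‖α‖ ^ (-ν) * ‖α‖ = ‖α‖ ^ (1 - ν) := by
        rw [← Real.rpow_add_one (ne_of_gt hpos) (-ν)]
        ring_nf
      calc 2 * (K₁ * ‖α‖ ^ (-ν)) * ‖α‖ = 2 * (K₁ * (‖α‖ ^ (-ν) * ‖α‖)) := by ring
        _ = 2 * (K₁ * ‖α‖ ^ (1 - ν)) := by rw [this]
    rw [e4]
    linarith
  have boundB : ∀ (α : E), α ≠ 0 → ∀ x : E,
      ‖(2 : ℝ) • g x - g (x + α) - g (x - α)‖ / ‖α‖ ≤ 2 * (K₂ * ‖α‖ ^ ν) := by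
    intro α hα x
    have hpos : (0:ℝ) < ‖α‖ := norm_pos_iff.2 hα
    rw [div_le_iff₀ hpos]
    set s : Set E := closedBall x ‖α‖ with hs_def
    have hs : Convex ℝ s := convex_closedBall _ _
    have hder : ∀ z ∈ s, HasFDerivWithinAt g (fderiv ℝ g z) s z := fun z _ =>
      ((hg.differentiable one_ne_zero) z).hasFDerivAt.hasFDerivWithinAt
    have hbound : ∀ z ∈ s, ‖fderiv ℝ g z - fderiv ℝ g x‖ ≤ K₂ * ‖α‖ ^ ν := by
      intro z hz
      refine (hK2 z x).trans ?_
      have hzx : ‖z - x‖ ≤ ‖α‖ := by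
        rwa [hs_def, mem_closedBall, dist_eq_norm] at hz
      exact mul_le_mul_of_nonneg_left
        (Real.rpow_le_rpow (norm_nonneg _) hzx hν0.le) hK2n
    have hxs : x ∈ s := mem_closedBall_self (norm_nonneg α)
    have hx1 : x + α ∈ s := by
      simp [hs_def, mem_closedBall, dist_eq_norm, add_sub_cancel_left]
    have hx2 : x - α ∈ s := by
      simp [hs_def, mem_closedBall, dist_eq_norm]
    have b1 := hs.norm_image_sub_le_of_norm_hasFDerivWithin_le' hder hbound hxs hx1
    have b2 := hs.norm_image_sub_le_of_norm_hasFDerivWithin_le' hder hbound hxs hx2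
    have b1' : ‖g (x + α) - g x - (fderiv ℝ g x) α‖ ≤ K₂ * ‖α‖ ^ ν * ‖α‖ := by
      simpa [add_sub_cancel_left] using b1
    have b2' : ‖g (x - α) - g x - (fderiv ℝ g x) (-α)‖ ≤ K₂ * ‖α‖ ^ ν * ‖α‖ := by
      simpa [sub_sub_cancel_left, norm_neg] using b2
    calc ‖(2 : ℝ) • g x - g (x + α) - g (x - α)‖
        = ‖-(g (x + α) - g x - (fderiv ℝ g x) α)
            - (g (x - α) - g x - (fderiv ℝ g x) (-α))‖ := by
          rw [(fderiv ℝ g x).map_neg, two_smul]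
          congr 1
          abel
      _ ≤ ‖g (x + α) - g x - (fderiv ℝ g x) α‖
            + ‖g (x - α) - g x - (fderiv ℝ g x) (-α)‖ := by
          refine (norm_sub_le _ _).trans ?_
          rw [norm_neg]
      _ ≤ K₂ * ‖α‖ ^ ν * ‖α‖ + K₂ * ‖α‖ ^ ν * ‖α‖ := add_le_add b1' b2'
      _ = 2 * (K₂ * ‖α‖ ^ ν) * ‖α‖ := by ring
  -- the radial majorant
  set F : ℝ → ℝ := fun r => min (2 * (K₁ * r ^ (-ν))) (2 * (K₂ * r ^ ν)) / r ^ d with hF_def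
  have hFmeas : Measurable F := by
    apply Measurable.div
    · exact Measurable.min (by fun_prop) (by fun_prop)
    · fun_prop
  have h_sup_le : ∀ (α : E), α ≠ 0 → f α ≤ F ‖α‖ := by
    intro α hα
    have hpos : (0:ℝ) < ‖α‖ := norm_pos_iff.2 hα
    have hposd : (0:ℝ) < ‖α‖ ^ d := by positivity
    simp only [hf_def, hF_def]
    exact div_le_div_of_nonneg_right
      (ciSup_le fun x => le_min (boundA α hα x) (boundB α hα x)) hposd.le
  have hae_ne : ∀ᵐ (α : E) ∂volume, α ≠ 0 := by
    have : volume ({(0:E)} : Set E) = 0 := measure_singleton _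
    filter_upwards [compl_mem_ae_iff.2 this] with α hα
    simpa using hα
  -- degenerate cases
  rcases eq_or_lt_of_le hK1n with hK1z | hK1p
  · have hzero : f =ᵐ[volume] (fun _ => (0:ℝ)) := by
      filter_upwards [hae_ne] with α hα
      refine le_antisymm ?_ (hf_nonneg α)
      refine (h_sup_le α hα).trans ?_
      rw [hF_def]
      have : min (2 * (K₁ * ‖α‖ ^ (-ν))) (2 * (K₂ * ‖α‖ ^ ν)) ≤ 0 := by
        refine (min_le_left _ _).trans ?_
        rw [← hK1z]; simp
      exact div_nonpos_of_nonpos_of_nonneg this (by positivity)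
    rw [show (∫ α : E, (⨆ x, ‖(2 : ℝ) • g x - g (x + α) - g (x - α)‖ / ‖α‖) / ‖α‖ ^ d)
        = ∫ α : E, f α from rfl, integral_congr_ae hzero, integral_zero]
    have : Real.sqrt K₁ = 0 := by rw [← hK1z, Real.sqrt_zero]
    rw [this, mul_zero]
  rcases eq_or_lt_of_le hK2n with hK2z | hK2p
  · have hzero : f =ᵐ[volume] (fun _ => (0:ℝ)) := by
      filter_upwards [hae_ne] with α hα
      refine le_antisymm ?_ (hf_nonneg α)
      refine (h_sup_le α hα).trans ?_
      rw [hF_def]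
      have : min (2 * (K₁ * ‖α‖ ^ (-ν))) (2 * (K₂ * ‖α‖ ^ ν)) ≤ 0 := by
        refine (min_le_right _ _).trans ?_
        rw [← hK2z]; simp
      exact div_nonpos_of_nonpos_of_nonneg this (by positivity)
    rw [show (∫ α : E, (⨆ x, ‖(2 : ℝ) • g x - g (x + α) - g (x - α)‖ / ‖α‖) / ‖α‖ ^ d)
        = ∫ α : E, f α from rfl, integral_congr_ae hzero, integral_zero]
    have : Real.sqrt K₂ = 0 := by rw [← hK2z, Real.sqrt_zero]
    rw [this, mul_zero, zero_mul]
  -- main case : K₁ > 0, K₂ > 0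
  set R : ℝ := (K₁ / K₂) ^ (1 / (2 * ν)) with hR_def
  have hR : (0:ℝ) < R := Real.rpow_pos_of_pos (div_pos hK1p hK2p) _
  have hRν : R ^ ν = Real.sqrt (K₁ / K₂) := by
    rw [hR_def, ← Real.rpow_mul (div_pos hK1p hK2p).le]
    have : 1 / (2 * ν) * ν = 1 / 2 := by field_simp
    rw [this, ← Real.sqrt_eq_rpow]
  have hRνneg : R ^ (-ν) = Real.sqrt (K₂ / K₁) := by
    rw [Real.rpow_neg hR.le, hRν, ← Real.sqrt_inv, inv_div]
  have hs1pos : (0:ℝ) < Real.sqrt K₁ := Real.sqrt_pos.2 hK1p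
  have hs2pos : (0:ℝ) < Real.sqrt K₂ := Real.sqrt_pos.2 hK2p
  have hprod1 : K₂ * R ^ ν = Real.sqrt K₂ * Real.sqrt K₁ := by
    rw [hRν, Real.sqrt_div hK1p.le, mul_div_assoc', div_eq_iff (ne_of_gt hs2pos)]
    linear_combination (-Real.sqrt K₁) * Real.mul_self_sqrt hK2p.le
  have hprod2 : K₁ * R ^ (-ν) = Real.sqrt K₂ * Real.sqrt K₁ := by
    rw [hRνneg, Real.sqrt_div hK2p.le, mul_div_assoc', div_eq_iff (ne_of_gt hs1pos)]
    linear_combination (-Real.sqrt K₂) * Real.mul_self_sqrt hK1p.le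
  -- the 1-dimensional integrand
  set G : ℝ → ℝ := fun r => r ^ (d - 1) * F r with hG_def
  have hGmeas : Measurable G := (measurable_id.pow_const _).mul hFmeas
  have hG_eq : ∀ r : ℝ, 0 < r →
      G r = min (2 * (K₁ * r ^ (-ν))) (2 * (K₂ * r ^ ν)) * r⁻¹ := by
    intro r hr
    have hrd : (r:ℝ) ^ d = r ^ (d - 1) * r := by
      conv_lhs => rw [show d = (d - 1) + 1 from (Nat.sub_add_cancel hd).symm]
      rw [pow_succ]
    rw [hG_def, hF_def]
    field_simp [hrd]
    rw [hrd]
  have hG_nonneg : ∀ r : ℝ, 0 < r → 0 ≤ G r := by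
    intro r hr
    rw [hG_eq r hr]
    have h1 : (0:ℝ) ≤ 2 * (K₁ * r ^ (-ν)) := by positivity
    have h2 : (0:ℝ) ≤ 2 * (K₂ * r ^ ν) := by positivity
    exact mul_nonneg (le_min h1 h2) (by positivity)
  have hG1 : ∀ r ∈ Ioc (0:ℝ) R, G r ≤ 2 * K₂ * r ^ (ν - 1) := by
    intro r hr
    have hr0 : (0:ℝ) < r := hr.1
    rw [hG_eq r hr0]
    have : 2 * (K₂ * r ^ ν) * r⁻¹ = 2 * K₂ * r ^ (ν - 1) := by
      rw [Real.rpow_sub hr0, Real.rpow_one]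
      field_simp
    calc min (2 * (K₁ * r ^ (-ν))) (2 * (K₂ * r ^ ν)) * r⁻¹
        ≤ 2 * (K₂ * r ^ ν) * r⁻¹ :=
          mul_le_mul_of_nonneg_right (min_le_right _ _) (by positivity)
      _ = 2 * K₂ * r ^ (ν - 1) := this
  have hG2 : ∀ r ∈ Ioi R, G r ≤ 2 * K₁ * r ^ (-ν - 1) := by
    intro r hr
    have hr0 : (0:ℝ) < r := hR.trans hr
    rw [hG_eq r hr0]
    have : 2 * (K₁ * r ^ (-ν)) * r⁻¹ = 2 * K₁ * r ^ (-ν - 1) := by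
      rw [Real.rpow_sub hr0, Real.rpow_one]
      field_simp
    calc min (2 * (K₁ * r ^ (-ν))) (2 * (K₂ * r ^ ν)) * r⁻¹
        ≤ 2 * (K₁ * r ^ (-ν)) * r⁻¹ :=
          mul_le_mul_of_nonneg_right (min_le_left _ _) (by positivity)
      _ = 2 * K₁ * r ^ (-ν - 1) := this
  -- integrability of the pieces
  have hInt1 : IntegrableOn (fun r : ℝ => 2 * K₂ * r ^ (ν - 1)) (Ioc 0 R) := by
    have := intervalIntegral.intervalIntegrable_rpow' (a := 0) (b := R) (r := ν - 1) (by linarith)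
    rw [intervalIntegrable_iff_integrableOn_Ioc_of_le hR.le] at this
    exact this.const_mul _
  have hInt2 : IntegrableOn (fun r : ℝ => 2 * K₁ * r ^ (-ν - 1)) (Ioi R) := by
    exact (integrableOn_Ioi_rpow_of_lt (by linarith) hR).const_mul _
  have hGint1 : IntegrableOn G (Ioc 0 R) := by
    refine Integrable.mono' hInt1 (hGmeas.aestronglyMeasurable.restrict) ?_
    filter_upwards [ae_restrict_mem measurableSet_Ioc] with r hr
    rw [Real.norm_eq_abs, abs_of_nonneg (hG_nonneg r hr.1)]
    exact hG1 r hr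
  have hGint2 : IntegrableOn G (Ioi R) := by
    refine Integrable.mono' hInt2 (hGmeas.aestronglyMeasurable.restrict) ?_
    filter_upwards [ae_restrict_mem measurableSet_Ioi] with r hr
    rw [Real.norm_eq_abs, abs_of_nonneg (hG_nonneg r (hR.trans hr))]
    exact hG2 r hr
  have hGint : IntegrableOn G (Ioi (0:ℝ)) := by
    rw [← Ioc_union_Ioi_eq_Ioi hR.le]
    exact hGint1.union hGint2
  -- value bounds for the 1-d integral
  have hval1 : ∫ r in Ioc (0:ℝ) R, 2 * K₂ * r ^ (ν - 1) = 2 * K₂ * (R ^ ν / ν) := by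
    rw [integral_const_mul, ← intervalIntegral.integral_of_le hR.le,
      integral_rpow (Or.inl (by linarith))]
    have h1 : ν - 1 + 1 = ν := by ring
    rw [h1, Real.zero_rpow (ne_of_gt hν0)]
    ring
  have hval2 : ∫ r in Ioi R, 2 * K₁ * r ^ (-ν - 1) = 2 * K₁ * (R ^ (-ν) / ν) := by
    rw [integral_const_mul, integral_Ioi_rpow_of_lt (by linarith) hR]
    have h1 : -ν - 1 + 1 = -ν := by ring
    rw [h1]
    field_simp
  have hIbound : ∫ r in Ioi (0:ℝ), G r ≤ 4 * (Real.sqrt K₂ * Real.sqrt K₁) / ν := by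
    have hsplit : ∫ r in Ioi (0:ℝ), G r
        = (∫ r in Ioc (0:ℝ) R, G r) + ∫ r in Ioi R, G r := by
      rw [← Ioc_union_Ioi_eq_Ioi hR.le]
      exact setIntegral_union (Ioc_disjoint_Ioi le_rfl) measurableSet_Ioi hGint1 hGint2
    have hle1 : ∫ r in Ioc (0:ℝ) R, G r ≤ 2 * K₂ * (R ^ ν / ν) := by
      rw [← hval1]
      exact setIntegral_mono_on hGint1 hInt1 measurableSet_Ioc hG1
    have hle2 : ∫ r in Ioi R, G r ≤ 2 * K₁ * (R ^ (-ν) / ν) := by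
      rw [← hval2]
      exact setIntegral_mono_on hGint2 hInt2 measurableSet_Ioi hG2
    rw [hsplit]
    have key : 2 * K₂ * (R ^ ν / ν) + 2 * K₁ * (R ^ (-ν) / ν)
        = 4 * (Real.sqrt K₂ * Real.sqrt K₁) / ν := by
      field_simp
      linear_combination (2 : ℝ) * hprod1 + 2 * hprod2
    linarith
  -- integrability of the majorant on E
  have hFintE : Integrable (fun α : E => F ‖α‖) volume := by
    apply aux_integrable_fun_norm volume hFmeas
    rw [hdim]
    exact hGint
  -- value of the majorant integral
  have hFval : ∫ α : E, F ‖α‖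
      = (d : ℝ) * (V * ∫ r in Ioi (0:ℝ), G r) := by
    rw [integral_fun_norm_addHaar volume F, hdim]
    simp only [nsmul_eq_mul, smul_eq_mul]
    rfl
  -- put everything together
  have hmain : ∫ α : E, f α ≤ ∫ α : E, F ‖α‖ := by
    refine integral_mono_of_nonneg (Filter.Eventually.of_forall hf_nonneg) hFintE ?_
    filter_upwards [hae_ne] with α hα
    exact h_sup_le α hα
  have hfinal : ∫ α : E, F ‖α‖ ≤ ((d : ℝ) * V * 4 / ν) * (Real.sqrt K₂ * Real.sqrt K₁) := by
    rw [hFval]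
    have h1 : V * ∫ r in Ioi (0:ℝ), G r ≤ V * (4 * (Real.sqrt K₂ * Real.sqrt K₁) / ν) :=
      mul_le_mul_of_nonneg_left hIbound hVnonneg
    have h2 : (d:ℝ) * (V * ∫ r in Ioi (0:ℝ), G r)
        ≤ (d:ℝ) * (V * (4 * (Real.sqrt K₂ * Real.sqrt K₁) / ν)) :=
      mul_le_mul_of_nonneg_left h1 (by positivity)
    refine h2.trans_eq ?_
    field_simp
  calc (∫ α : E, (⨆ x, ‖(2 : ℝ) • g x - g (x + α) - g (x - α)‖ / ‖α‖) / ‖α‖ ^ d)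
      = ∫ α : E, f α := rfl
    _ ≤ ∫ α : E, F ‖α‖ := hmain
    _ ≤ ((d : ℝ) * V * 4 / ν) * (Real.sqrt K₂ * Real.sqrt K₁) := hfinal
    _ ≤ C * Real.sqrt K₂ * Real.sqrt K₁ := by
        have : ((d : ℝ) * V * 4 / ν) ≤ C := by rw [hC]; linarith
        nlinarith [Real.sqrt_nonneg K₁, Real.sqrt_nonneg K₂,
          mul_nonneg (Real.sqrt_nonneg K₂) (Real.sqrt_nonneg K₁)]
end

section
/- Let d, N ≥ 1 be integers and ν ∈ (0, 1/2). Let f, g : ℝ^d → ℝ^N be functions with [g]_{Ċ^{1/2}} < ∞, [f]_{Ċ^{1/2+ν}} < ∞ and [f]_{Ċ^{1/2−ν}} < ∞. Then there is a constant C depending only on d and ν such that ∫_{ℝ^d} ( sup_x ‖δ_α f(x)‖ ) · ( sup_x ‖δ_α g(x)‖ ) · dα / |α|^{d+1} ≤ C [g]_{Ċ^{1/2}} · ( [f]_{Ċ^{1/2+ν}} )^{1/2} ( [f]_{Ċ^{1/2−ν}} )^{1/2}. -/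
open MeasureTheory Set Module
open scoped ENNReal

private lemma my_lintegral_fun_norm_addHaar {E : Type*} [NormedAddCommGroup E] [NormedSpace ℝ E]
    [MeasurableSpace E] [BorelSpace E] [FiniteDimensional ℝ E] [Nontrivial E]
    (μ : Measure E) [μ.IsAddHaarMeasure] (g : ℝ → ENNReal) (hg : Measurable g) :
    ∫⁻ x, g ‖x‖ ∂μ = (finrank ℝ E) * μ (Metric.ball 0 1) *
      ∫⁻ y in Ioi (0 : ℝ), ENNReal.ofReal (y ^ (finrank ℝ E - 1)) * g y := by
  have h1 : ∫⁻ x, g ‖x‖ ∂μ = ∫⁻ x : ({0}ᶜ : Set E), g ‖x.1‖ ∂(μ.comap (↑)) := by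
    rw [lintegral_subtype_comap (measurableSet_singleton 0).compl (fun x => g ‖x‖),
      MeasureTheory.restrict_compl_singleton]
  have h2 : ∫⁻ x : ({0}ᶜ : Set E), g ‖x.1‖ ∂(μ.comap (↑)) =
      ∫⁻ p : Metric.sphere (0:E) 1 × Ioi (0:ℝ), g p.2
        ∂(μ.toSphere.prod (.volumeIoiPow (finrank ℝ E - 1))) := by
    simpa [Function.comp_def] using μ.measurePreserving_homeomorphUnitSphereProd.lintegral_comp
      ((hg.comp measurable_subtype_coe).comp measurable_snd)
  have h3 : ∫⁻ p : Metric.sphere (0:E) 1 × Ioi (0:ℝ), g p.2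
        ∂(μ.toSphere.prod (.volumeIoiPow (finrank ℝ E - 1))) =
      μ.toSphere univ * ∫⁻ r : Ioi (0:ℝ), g r ∂(Measure.volumeIoiPow (finrank ℝ E - 1)) := by
    rw [MeasureTheory.lintegral_prod (fun p : Metric.sphere (0:E) 1 × Ioi (0:ℝ) => g p.2)
      (by exact ((hg.comp measurable_subtype_coe).comp measurable_snd).aemeasurable)]
    simp [MeasureTheory.lintegral_const, mul_comm]
  have h4 : ∫⁻ r : Ioi (0:ℝ), g r ∂(Measure.volumeIoiPow (finrank ℝ E - 1)) =
      ∫⁻ y in Ioi (0 : ℝ), ENNReal.ofReal (y ^ (finrank ℝ E - 1)) * g y := by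
    rw [Measure.volumeIoiPow, lintegral_withDensity_eq_lintegral_mul _
      (f := fun r : Ioi (0:ℝ) => ENNReal.ofReal (r.1 ^ (finrank ℝ E - 1)))
      (by exact (measurable_subtype_coe.pow_const _).ennreal_ofReal)
      (g := fun r : Ioi (0:ℝ) => g r.1) (by exact hg.comp measurable_subtype_coe)]
    exact lintegral_subtype_comap measurableSet_Ioi
      (fun y => ENNReal.ofReal (y ^ (finrank ℝ E - 1)) * g y)
  rw [h1, h2, h3, h4, Measure.toSphere_apply_univ]

private lemma my_sup_diff_le {d N : ℕ} (f : EuclideanSpace ℝ (Fin d) → EuclideanSpace ℝ (Fin N))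
    (K s : ℝ) (h : ∀ x y, ‖f x - f y‖ ≤ K * ‖x - y‖ ^ s) (α : EuclideanSpace ℝ (Fin d)) :
    (⨆ x, ‖f x - f (x - α)‖) ≤ K * ‖α‖ ^ s :=
  Real.iSup_le (fun x => by simpa [sub_sub_cancel] using h x (x - α))
    (le_trans (norm_nonneg _) (by simpa [sub_sub_cancel] using h 0 (0 - α)))

/-- Integral bound for products of finite differences:
`∫ (sup_x ‖δ_α f‖)(sup_x ‖δ_α g‖) dα/|α|^{d+1} ≲ [g]_{Ċ^{1/2}} [f]_{Ċ^{1/2+ν}}^{1/2} [f]_{Ċ^{1/2−ν}}^{1/2}`. -/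
theorem finite_difference_product_integral_bound
    (d N : ℕ) (hd : 1 ≤ d) (hN : 1 ≤ N) (ν : ℝ) (hν : ν ∈ Ioo (0 : ℝ) (1 / 2)) :
    ∃ C : ℝ, 0 < C ∧
      ∀ (f g : EuclideanSpace ℝ (Fin d) → EuclideanSpace ℝ (Fin N)) (Kg Kfp Kfm : ℝ),
        (∀ x y, ‖g x - g y‖ ≤ Kg * ‖x - y‖ ^ ((1 : ℝ) / 2)) →
        (∀ x y, ‖f x - f y‖ ≤ Kfp * ‖x - y‖ ^ ((1 : ℝ) / 2 + ν)) →
        (∀ x y, ‖f x - f y‖ ≤ Kfm * ‖x - y‖ ^ ((1 : ℝ) / 2 - ν)) →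
        (∫ α : EuclideanSpace ℝ (Fin d),
            ((⨆ x, ‖f x - f (x - α)‖) * (⨆ x, ‖g x - g (x - α)‖)) / ‖α‖ ^ (d + 1)) ≤
          C * Kg * Real.sqrt Kfp * Real.sqrt Kfm := by
  obtain ⟨hν0, hν2⟩ := hν
  set E := EuclideanSpace ℝ (Fin d) with hE
  haveI : Nontrivial E := by
    apply nontrivial_of_finrank_pos (R := ℝ)
    rw [finrank_euclideanSpace_fin]; omega
  have hdim : finrank ℝ E = d := finrank_euclideanSpace_fin
  set V : ℝ := (volume (Metric.ball (0 : E) 1)).toReal with hV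
  have hVpos : 0 < V := ENNReal.toReal_pos (Metric.measure_ball_pos volume 0 one_pos).ne'
    (measure_ball_lt_top).ne
  have hdpos : (0:ℝ) < d := by exact_mod_cast hd
  refine ⟨d * V * 2 / ν, by positivity, fun f g Kg Kfp Kfm hg hfp hfm => ?_⟩
  -- nonnegativity of the constants
  set e : E := EuclideanSpace.single (⟨0, hd⟩ : Fin d) (1:ℝ) with he
  have hne : ‖e - 0‖ = 1 := by
    rw [sub_zero, he, EuclideanSpace.norm_single, norm_one]
  have hKnn : ∀ (h' : E → EuclideanSpace ℝ (Fin N)) (K s : ℝ),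
      (∀ x y, ‖h' x - h' y‖ ≤ K * ‖x - y‖ ^ s) → 0 ≤ K := by
    intro h' K s hh
    have h1 := hh e 0
    rw [hne, Real.one_rpow, mul_one] at h1
    exact le_trans (norm_nonneg _) h1
  have hKg0 := hKnn g Kg _ hg
  have hKfp0 := hKnn f Kfp _ hfp
  have hKfm0 := hKnn f Kfm _ hfm
  have hRHS0 : 0 ≤ d * V * 2 / ν * Kg * Real.sqrt Kfp * Real.sqrt Kfm := by positivity
  -- degenerate cases : one of the constants vanishes
  have hdeg : ∀ K : ℝ, ∀ s : ℝ, ∀ h' : E → EuclideanSpace ℝ (Fin N),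
      (∀ x y, ‖h' x - h' y‖ ≤ K * ‖x - y‖ ^ s) → K = 0 →
      ∀ α : E, (⨆ x, ‖h' x - h' (x - α)‖) = 0 := by
    intro K s h' hh hK α
    refine le_antisymm ?_ (Real.iSup_nonneg fun x => norm_nonneg _)
    have := my_sup_diff_le h' K s hh α
    rwa [hK, zero_mul] at this
  rcases eq_or_lt_of_le hKg0 with hKg | hKg
  · have h0 := hdeg Kg _ g hg hKg.symm
    calc (∫ α : E, ((⨆ x, ‖f x - f (x - α)‖) * (⨆ x, ‖g x - g (x - α)‖)) / ‖α‖ ^ (d + 1))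
        = ∫ α : E, (0:ℝ) := by
          congr 1; funext α; rw [h0 α, mul_zero, zero_div]
      _ ≤ _ := by rw [integral_zero]; exact hRHS0
  rcases eq_or_lt_of_le hKfp0 with hKfp | hKfp
  · have h0 := hdeg Kfp _ f hfp hKfp.symm
    calc (∫ α : E, ((⨆ x, ‖f x - f (x - α)‖) * (⨆ x, ‖g x - g (x - α)‖)) / ‖α‖ ^ (d + 1))
        = ∫ α : E, (0:ℝ) := by
          congr 1; funext α; rw [h0 α, zero_mul, zero_div]
      _ ≤ _ := by rw [integral_zero]; exact hRHS0
  rcases eq_or_lt_of_le hKfm0 with hKfm | hKfm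
  · have h0 := hdeg Kfm _ f hfm hKfm.symm
    calc (∫ α : E, ((⨆ x, ‖f x - f (x - α)‖) * (⨆ x, ‖g x - g (x - α)‖)) / ‖α‖ ^ (d + 1))
        = ∫ α : E, (0:ℝ) := by
          congr 1; funext α; rw [h0 α, zero_mul, zero_div]
      _ ≤ _ := by rw [integral_zero]; exact hRHS0
  -- main case
  set R : ℝ := (Kfm / Kfp) ^ ((1:ℝ)/(2*ν)) with hRdef
  have hR : 0 < R := Real.rpow_pos_of_pos (div_pos hKfm hKfp) _
  have hRν : Kfp * R ^ ν = Real.sqrt Kfp * Real.sqrt Kfm := by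
    have h1 : R ^ ν = (Kfm/Kfp) ^ ((1:ℝ)/2) := by
      rw [hRdef, ← Real.rpow_mul (div_pos hKfm hKfp).le]
      congr 1
      field_simp
    rw [h1, ← Real.sqrt_eq_rpow, Real.sqrt_div hKfm.le]
    have h2 : Real.sqrt Kfp ≠ 0 := (Real.sqrt_pos.mpr hKfp).ne'
    field_simp
    linear_combination (-1 : ℝ) * Real.sq_sqrt hKfp.le
  have hRν' : Kfm * R ^ (-ν) = Real.sqrt Kfp * Real.sqrt Kfm := by
    have h1 : R ^ (-ν) = (Kfm/Kfp) ^ (-((1:ℝ)/2)) := by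
      rw [hRdef, ← Real.rpow_mul (div_pos hKfm hKfp).le]
      congr 1
      field_simp
    rw [h1, Real.rpow_neg (div_pos hKfm hKfp).le, ← Real.sqrt_eq_rpow,
      Real.sqrt_div hKfm.le]
    have h2 : Real.sqrt Kfm ≠ 0 := (Real.sqrt_pos.mpr hKfm).ne'
    have h3 : Real.sqrt Kfp ≠ 0 := (Real.sqrt_pos.mpr hKfp).ne'
    rw [inv_div]
    field_simp
    linear_combination (-1 : ℝ) * Real.sq_sqrt hKfm.le
  set φ : ℝ → ℝ := fun r =>
    Kg * min (Kfp * r ^ ((1:ℝ)/2 + ν)) (Kfm * r ^ ((1:ℝ)/2 - ν)) * r ^ ((1:ℝ)/2) / r ^ (d+1)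
    with hφdef
  have hφm : Measurable φ := by
    rw [hφdef]
    fun_prop
  have hF0 : ∀ α : E,
      0 ≤ ((⨆ x, ‖f x - f (x - α)‖) * (⨆ x, ‖g x - g (x - α)‖)) / ‖α‖ ^ (d+1) := fun α =>
    div_nonneg (mul_nonneg (Real.iSup_nonneg fun x => norm_nonneg _)
      (Real.iSup_nonneg fun x => norm_nonneg _)) (pow_nonneg (norm_nonneg _) _)
  have hFφ : ∀ α : E,
      ((⨆ x, ‖f x - f (x - α)‖) * (⨆ x, ‖g x - g (x - α)‖)) / ‖α‖ ^ (d+1) ≤ φ ‖α‖ := by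
    intro α
    have hSf := le_min (my_sup_diff_le f Kfp _ hfp α) (my_sup_diff_le f Kfm _ hfm α)
    have hSg := my_sup_diff_le g Kg _ hg α
    have hmin0 : 0 ≤ min (Kfp * ‖α‖ ^ ((1:ℝ)/2+ν)) (Kfm * ‖α‖ ^ ((1:ℝ)/2-ν)) :=
      le_min (by positivity) (by positivity)
    have hnum : (⨆ x, ‖f x - f (x - α)‖) * (⨆ x, ‖g x - g (x - α)‖) ≤
        Kg * min (Kfp * ‖α‖ ^ ((1:ℝ)/2+ν)) (Kfm * ‖α‖ ^ ((1:ℝ)/2-ν)) * ‖α‖ ^ ((1:ℝ)/2) := by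
      calc (⨆ x, ‖f x - f (x - α)‖) * (⨆ x, ‖g x - g (x - α)‖)
          ≤ (min (Kfp * ‖α‖ ^ ((1:ℝ)/2+ν)) (Kfm * ‖α‖ ^ ((1:ℝ)/2-ν))) * (Kg * ‖α‖ ^ ((1:ℝ)/2)) :=
            mul_le_mul hSf hSg (Real.iSup_nonneg fun x => norm_nonneg _) hmin0
        _ = _ := by ring
    simp only [hφdef]
    rcases eq_or_lt_of_le (pow_nonneg (norm_nonneg α) (d+1)) with hD | hD
    · rw [← hD, div_zero, div_zero]
    · exact (div_le_div_iff_of_pos_right hD).mpr hnum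
  have key1 : ∀ y ∈ Ioc (0:ℝ) R, ENNReal.ofReal (y ^ (d-1)) * ENNReal.ofReal (φ y) ≤
      ENNReal.ofReal (Kg * Kfp * y ^ (ν - 1)) := by
    intro y hy
    have hy0 : (0:ℝ) < y := hy.1
    rw [← ENNReal.ofReal_mul (by positivity)]
    apply ENNReal.ofReal_le_ofReal
    have hle : φ y ≤ Kg * (Kfp * y ^ ((1:ℝ)/2 + ν)) * y ^ ((1:ℝ)/2) / y ^ (d+1) := by
      simp only [hφdef]
      gcongr
      exact min_le_left _ _
    calc y ^ (d-1) * φ y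
        ≤ y ^ (d-1) * (Kg * (Kfp * y ^ ((1:ℝ)/2+ν)) * y ^ ((1:ℝ)/2) / y ^ (d+1)) :=
          mul_le_mul_of_nonneg_left hle (by positivity)
      _ = Kg * Kfp * (y ^ ((d:ℝ) - 1) * (y ^ ((1:ℝ)/2 + ν) * (y ^ ((1:ℝ)/2) *
            (y ^ ((d:ℝ) + 1))⁻¹))) := by
          rw [← Real.rpow_natCast y (d-1), ← Real.rpow_natCast y (d+1), Nat.cast_sub hd]
          push_cast
          ring
      _ = Kg * Kfp * y ^ (ν - 1) := by
          rw [← Real.rpow_neg hy0.le, ← Real.rpow_add hy0, ← Real.rpow_add hy0,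
            ← Real.rpow_add hy0]
          congr 1
          ring
  have key2 : ∀ y ∈ Ioi R, ENNReal.ofReal (y ^ (d-1)) * ENNReal.ofReal (φ y) ≤
      ENNReal.ofReal (Kg * Kfm * y ^ (-ν - 1)) := by
    intro y hy
    have hy0 : (0:ℝ) < y := hR.trans hy
    rw [← ENNReal.ofReal_mul (by positivity)]
    apply ENNReal.ofReal_le_ofReal
    have hle : φ y ≤ Kg * (Kfm * y ^ ((1:ℝ)/2 - ν)) * y ^ ((1:ℝ)/2) / y ^ (d+1) := by
      simp only [hφdef]
      gcongr
      exact min_le_right _ _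
    calc y ^ (d-1) * φ y
        ≤ y ^ (d-1) * (Kg * (Kfm * y ^ ((1:ℝ)/2-ν)) * y ^ ((1:ℝ)/2) / y ^ (d+1)) :=
          mul_le_mul_of_nonneg_left hle (by positivity)
      _ = Kg * Kfm * (y ^ ((d:ℝ) - 1) * (y ^ ((1:ℝ)/2 - ν) * (y ^ ((1:ℝ)/2) *
            (y ^ ((d:ℝ) + 1))⁻¹))) := by
          rw [← Real.rpow_natCast y (d-1), ← Real.rpow_natCast y (d+1), Nat.cast_sub hd]
          push_cast
          ring
      _ = Kg * Kfm * y ^ (-ν - 1) := by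
          rw [← Real.rpow_neg hy0.le, ← Real.rpow_add hy0, ← Real.rpow_add hy0,
            ← Real.rpow_add hy0]
          congr 1
          ring
  have ii1 : IntegrableOn (fun y => Kg * Kfp * y ^ (ν-1)) (Ioc (0:ℝ) R) := by
    apply Integrable.const_mul
    exact (intervalIntegrable_iff_integrableOn_Ioc_of_le hR.le).mp
      (intervalIntegral.intervalIntegrable_rpow' (by linarith))
  have ii2 : IntegrableOn (fun y => Kg * Kfm * y ^ (-ν-1)) (Ioi R) :=
    (integrableOn_Ioi_rpow_of_lt (by linarith) hR).const_mul _
  have int1 : ∫ y in Ioc (0:ℝ) R, Kg * Kfp * y ^ (ν-1) = Kg * Kfp * (R ^ ν / ν) := by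
    rw [MeasureTheory.integral_const_mul]
    congr 1
    rw [← intervalIntegral.integral_of_le hR.le, integral_rpow (Or.inl (by linarith))]
    rw [show ν - 1 + 1 = ν by ring, Real.zero_rpow hν0.ne']
    ring
  have int2 : ∫ y in Ioi R, Kg * Kfm * y ^ (-ν-1) = Kg * Kfm * (R ^ (-ν) / ν) := by
    rw [MeasureTheory.integral_const_mul]
    congr 1
    rw [integral_Ioi_rpow_of_lt (by linarith) hR]
    rw [show -ν - 1 + 1 = -ν by ring]
    field_simp
  have hIle : (∫⁻ α : E, ENNReal.ofReal (φ ‖α‖)) ≤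
      ENNReal.ofReal (d * V * 2 / ν * Kg * Real.sqrt Kfp * Real.sqrt Kfm) := by
    rw [my_lintegral_fun_norm_addHaar volume (fun r => ENNReal.ofReal (φ r))
      hφm.ennreal_ofReal, hdim]
    rw [show Ioi (0:ℝ) = Ioc 0 R ∪ Ioi R from (Ioc_union_Ioi_eq_Ioi hR.le).symm,
      lintegral_union measurableSet_Ioi (Ioc_disjoint_Ioi le_rfl)]
    have hb1 : (∫⁻ y in Ioc (0:ℝ) R, ENNReal.ofReal (y ^ (d-1)) * ENNReal.ofReal (φ y)) ≤
        ENNReal.ofReal (Kg * Kfp * (R ^ ν / ν)) := by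
      calc (∫⁻ y in Ioc (0:ℝ) R, ENNReal.ofReal (y ^ (d-1)) * ENNReal.ofReal (φ y))
          ≤ ∫⁻ y in Ioc (0:ℝ) R, ENNReal.ofReal (Kg * Kfp * y ^ (ν-1)) :=
            setLIntegral_mono (by fun_prop) key1
        _ = ENNReal.ofReal (∫ y in Ioc (0:ℝ) R, Kg * Kfp * y ^ (ν-1)) :=
            (ofReal_integral_eq_lintegral_ofReal ii1
              ((ae_restrict_iff' measurableSet_Ioc).mpr
                (ae_of_all _ fun y hy => by
                  have hy0 : (0:ℝ) < y := hy.1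
                  positivity))).symm
        _ = _ := by rw [int1]
    have hb2 : (∫⁻ y in Ioi R, ENNReal.ofReal (y ^ (d-1)) * ENNReal.ofReal (φ y)) ≤
        ENNReal.ofReal (Kg * Kfm * (R ^ (-ν) / ν)) := by
      calc (∫⁻ y in Ioi R, ENNReal.ofReal (y ^ (d-1)) * ENNReal.ofReal (φ y))
          ≤ ∫⁻ y in Ioi R, ENNReal.ofReal (Kg * Kfm * y ^ (-ν-1)) :=
            setLIntegral_mono (by fun_prop) key2
        _ = ENNReal.ofReal (∫ y in Ioi R, Kg * Kfm * y ^ (-ν-1)) :=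
            (ofReal_integral_eq_lintegral_ofReal ii2
              ((ae_restrict_iff' measurableSet_Ioi).mpr
                (ae_of_all _ fun y hy => by
                  have : (0:ℝ) < y := hR.trans hy
                  positivity))).symm
        _ = _ := by rw [int2]
    calc (d : ℝ≥0∞) * volume (Metric.ball (0:E) 1) *
          ((∫⁻ y in Ioc (0:ℝ) R, ENNReal.ofReal (y ^ (d-1)) * ENNReal.ofReal (φ y)) +
           (∫⁻ y in Ioi R, ENNReal.ofReal (y ^ (d-1)) * ENNReal.ofReal (φ y)))
        ≤ (d : ℝ≥0∞) * volume (Metric.ball (0:E) 1) *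
          (ENNReal.ofReal (Kg * Kfp * (R ^ ν / ν)) + ENNReal.ofReal (Kg * Kfm * (R ^ (-ν) / ν))) := by
          gcongr
      _ = ENNReal.ofReal (d * V * 2 / ν * Kg * Real.sqrt Kfp * Real.sqrt Kfm) := by
          rw [← ENNReal.ofReal_add (by positivity) (by positivity),
            show volume (Metric.ball (0:E) 1) = ENNReal.ofReal V from
              (ENNReal.ofReal_toReal measure_ball_lt_top.ne).symm,
            show ((d:ℝ≥0∞)) = ENNReal.ofReal (d:ℝ) by simp,
            ← ENNReal.ofReal_mul (by positivity), ← ENNReal.ofReal_mul (by positivity)]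
          congr 1
          have hνne : ν ≠ 0 := hν0.ne'
          rw [show Kg * Kfp * (R ^ ν / ν) = Kg * (Kfp * R ^ ν) / ν by ring,
            show Kg * Kfm * (R ^ (-ν) / ν) = Kg * (Kfm * R ^ (-ν)) / ν by ring, hRν, hRν']
          field_simp
          ring
  calc (∫ α : E, ((⨆ x, ‖f x - f (x - α)‖) * (⨆ x, ‖g x - g (x - α)‖)) / ‖α‖ ^ (d+1))
      ≤ (∫⁻ α : E, ENNReal.ofReal (φ ‖α‖)).toReal := by
        by_cases hFi : Integrable (fun α : E =>
          ((⨆ x, ‖f x - f (x - α)‖) * (⨆ x, ‖g x - g (x - α)‖)) / ‖α‖ ^ (d+1)) volume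
        · rw [integral_eq_lintegral_of_nonneg_ae (ae_of_all _ hF0) hFi.aestronglyMeasurable]
          apply ENNReal.toReal_mono (ne_top_of_le_ne_top ENNReal.ofReal_ne_top hIle)
          exact lintegral_mono fun α => ENNReal.ofReal_le_ofReal (hFφ α)
        · rw [integral_undef hFi]; exact ENNReal.toReal_nonneg
    _ ≤ _ := ENNReal.toReal_le_of_le_ofReal hRHS0 hIle
end

section
/- Let h : ℝ → ℝ be continuous and 2π-periodic, and suppose the function α ↦ h(α)/α is integrable on (−π, π). Then the limit lim_{N→∞} ∫_{−(2N+1)π}^{(2N+1)π} h(α)/α dα exists and equals ∫_{−π}^{π} h(α) · (1/2)·cot(α/2) dα. -/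
open MeasureTheory Set Filter
section AuxPSI
open Real


noncomputable def wfn (n : ℕ) (α : ℝ) : ℝ := 2 * α / (α ^ 2 - (2 * ((n : ℝ) + 1) * π) ^ 2)

lemma summable_base : Summable (fun n : ℕ => 1 / ((n : ℝ) + 1) ^ 2) := by
  have := (summable_nat_add_iff (f := fun n : ℕ => 1 / (n : ℝ) ^ 2) 1).mpr
    ((Real.summable_one_div_nat_pow (p := 2)).mpr one_lt_two)
  simpa [add_comm] using this

noncomputable def ubnd (n : ℕ) : ℝ := 2 / (3 * π) * (1 / ((n : ℝ) + 1) ^ 2)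

lemma summable_ubnd : Summable ubnd := summable_base.mul_left _

lemma wfn_bound {n : ℕ} {α : ℝ} (hα : α ∈ Ioo (-π) π) : |wfn n α| ≤ ubnd n := by
  obtain ⟨h1, h2⟩ := hα
  have hπ := Real.pi_pos
  have hn1 : (1 : ℝ) ≤ (n : ℝ) + 1 := by
    have : (0:ℝ) ≤ (n:ℝ) := Nat.cast_nonneg n
    linarith
  have habs : |α| < π := abs_lt.mpr ⟨h1, h2⟩
  have hc : (2 * ((n : ℝ) + 1) * π) ^ 2 - α ^ 2 ≥ 3 * ((n : ℝ) + 1) ^ 2 * π ^ 2 := by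
    have h4 : (2 * ((n : ℝ) + 1) * π) ^ 2 = 4 * ((n : ℝ) + 1) ^ 2 * π ^ 2 := by ring
    have hα2 : α ^ 2 ≤ π ^ 2 := by
      rw [← sq_abs]; exact pow_le_pow_left₀ (abs_nonneg _) habs.le 2
    have hs : (1:ℝ) ≤ ((n : ℝ) + 1) ^ 2 := by nlinarith
    nlinarith [sq_nonneg π]
  have hs : (1:ℝ) ≤ ((n : ℝ) + 1) ^ 2 := by nlinarith
  have hpos : (0:ℝ) < (2 * ((n : ℝ) + 1) * π) ^ 2 - α ^ 2 := by nlinarith [sq_nonneg π]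
  rw [wfn, abs_div]
  rw [abs_of_neg (by linarith : α ^ 2 - (2 * ((n : ℝ) + 1) * π) ^ 2 < 0)]
  rw [div_le_iff₀ (by linarith)]
  have h2a : |2 * α| ≤ 2 * π := by
    rw [abs_mul, abs_two]; nlinarith
  calc |2 * α| ≤ 2 * π := h2a
    _ ≤ ubnd n * (3 * ((n : ℝ) + 1) ^ 2 * π ^ 2) := by
        have heq : ubnd n * (3 * ((n : ℝ) + 1) ^ 2 * π ^ 2) = 2 * π := by
          rw [ubnd]; field_simp
        linarith
    _ ≤ ubnd n * -(α ^ 2 - (2 * ((n : ℝ) + 1) * π) ^ 2) := by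
        apply mul_le_mul_of_nonneg_left (by linarith) (by rw [ubnd]; positivity)

lemma qbound {n : ℕ} {α : ℝ} (hα : α ∈ Ioo (-π) π) :
    α ^ 2 / (2 * ((n : ℝ) + 1) * π) ^ 2 ≤ 1 / 4 := by
  obtain ⟨h1, h2⟩ := hα
  have hπ := Real.pi_pos
  have hn1 : (1 : ℝ) ≤ (n : ℝ) + 1 := by
    have : (0:ℝ) ≤ (n:ℝ) := Nat.cast_nonneg n
    linarith
  have hs : (1:ℝ) ≤ ((n : ℝ) + 1) ^ 2 := by nlinarith
  have habs : |α| < π := abs_lt.mpr ⟨h1, h2⟩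
  have hα2 : α ^ 2 ≤ π ^ 2 := by
    rw [← sq_abs]; exact pow_le_pow_left₀ (abs_nonneg _) habs.le 2
  rw [div_le_iff₀ (by positivity)]
  nlinarith [sq_nonneg π]

lemma neg_log_bound {q : ℝ} (h0 : 0 ≤ q) (h1 : q ≤ 1 / 2) : |Real.log (1 - q)| ≤ 2 * q := by
  have hpos : (0:ℝ) < 1 - q := by linarith
  have hle : Real.log (1 - q) ≤ 0 := Real.log_nonpos (by linarith) (by linarith)
  rw [abs_of_nonpos hle, ← Real.log_inv]
  have := Real.log_le_sub_one_of_pos (x := (1 - q)⁻¹) (by positivity)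
  have h2 : (1 - q)⁻¹ - 1 = q / (1 - q) := by field_simp; ring
  have h3 : q / (1 - q) ≤ 2 * q := by
    rw [div_le_iff₀ hpos]; nlinarith
  linarith [this, h2 ▸ this]

noncomputable def gfn (n : ℕ) (α : ℝ) : ℝ := Real.log (1 - α ^ 2 / (2 * ((n : ℝ) + 1) * π) ^ 2)

lemma summable_gfn {α : ℝ} (hα : α ∈ Ioo (-π) π) : Summable (fun n => gfn n α) := by
  have hπ := Real.pi_pos
  apply Summable.of_norm_bounded (g := fun n : ℕ => 2 * α ^ 2 / (2 * π) ^ 2 * (1 / ((n : ℝ) + 1) ^ 2))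
    (summable_base.mul_left _)
  intro n
  have hq0 : (0:ℝ) ≤ α ^ 2 / (2 * ((n : ℝ) + 1) * π) ^ 2 := by positivity
  have := neg_log_bound hq0 (le_trans (qbound hα) (by norm_num))
  rw [gfn, Real.norm_eq_abs]
  refine le_trans this (le_of_eq ?_)
  have hn : ((n:ℝ) + 1) ≠ 0 := by positivity
  field_simp

lemma hasDerivAt_gfn {n : ℕ} {α : ℝ} (hα : α ∈ Ioo (-π) π) :
    HasDerivAt (gfn n) (wfn n α) α := by
  have hπ := Real.pi_pos
  have hc : (0:ℝ) < (2 * ((n : ℝ) + 1) * π) ^ 2 := by positivity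
  have hne : 1 - α ^ 2 / (2 * ((n : ℝ) + 1) * π) ^ 2 ≠ 0 := by
    have := qbound (n := n) hα
    intro hcon; rw [sub_eq_zero] at hcon; rw [← hcon] at this; norm_num at this
  have h1 : HasDerivAt (fun z : ℝ => 1 - z ^ 2 / (2 * ((n : ℝ) + 1) * π) ^ 2)
      (-(2 * α ^ (2-1) / (2 * ((n : ℝ) + 1) * π) ^ 2)) α := by
    exact ((hasDerivAt_pow 2 α).div_const _).const_sub 1
  have := h1.log hne
  convert this using 1
  · rfl
  have hd : α ^ 2 - (2 * ((n : ℝ) + 1) * π) ^ 2 ≠ 0 := by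
    intro hcon
    apply hne
    have h5 : α ^ 2 = (2 * ((n : ℝ) + 1) * π) ^ 2 := by linarith
    rw [h5]; field_simp; norm_num
  rw [wfn, eq_div_iff hne]
  rw [one_sub_div hc.ne', div_mul_div_comm, div_eq_iff (mul_ne_zero hd hc.ne')]
  field_simp [hd, hc.ne']
  ring

lemma hasSum_gfn {α : ℝ} (hα : α ∈ Ioo 0 π) :
    HasSum (fun n => gfn n α) (Real.log (Real.sin (α / 2)) - Real.log (α / 2)) := by
  have hπ := Real.pi_pos
  obtain ⟨h1, h2⟩ := hα
  have hα' : α ∈ Ioo (-π) π := ⟨by linarith, h2⟩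
  have hsin : (0:ℝ) < Real.sin (α / 2) :=
    Real.sin_pos_of_pos_of_lt_pi (by linarith) (by linarith)
  set x : ℝ := α / (2 * π) with hx
  have hP := Real.tendsto_euler_sin_prod x
  have hπx : π * x = α / 2 := by rw [hx]; field_simp
  have hfac : ∀ j : ℕ, (1 : ℝ) - x ^ 2 / ((j:ℝ) + 1) ^ 2 = 1 - α ^ 2 / (2 * ((j : ℝ) + 1) * π) ^ 2 := by
    intro j
    have hj : ((j:ℝ) + 1) ≠ 0 := by positivity
    rw [hx]; field_simp
  have hfacpos : ∀ j : ℕ, (0:ℝ) < 1 - α ^ 2 / (2 * ((j : ℝ) + 1) * π) ^ 2 := by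
    intro j
    have := qbound (n := j) hα'
    have hq0 : (0:ℝ) ≤ α ^ 2 / (2 * ((j : ℝ) + 1) * π) ^ 2 := by positivity
    linarith
  -- log of partial products
  have hlog : ∀ n : ℕ, Real.log (π * x * ∏ j ∈ Finset.range n, ((1:ℝ) - x ^ 2 / ((j:ℝ) + 1) ^ 2))
      = Real.log (α / 2) + ∑ j ∈ Finset.range n, gfn j α := by
    intro n
    have hprodpos : (0:ℝ) < ∏ j ∈ Finset.range n, ((1:ℝ) - x ^ 2 / ((j:ℝ) + 1) ^ 2) := by
      apply Finset.prod_pos; intro j _; rw [hfac j]; exact hfacpos j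
    rw [Real.log_mul (by rw [hπx]; positivity) (ne_of_gt hprodpos), hπx,
      Real.log_prod (fun j _ => by rw [hfac j]; exact (hfacpos j).ne')]
    congr 1
    exact Finset.sum_congr rfl (fun j _ => by rw [hfac j, gfn])
  have hcont : Tendsto (fun n : ℕ => Real.log (π * x * ∏ j ∈ Finset.range n, ((1:ℝ) - x ^ 2 / ((j:ℝ) + 1) ^ 2)))
      atTop (nhds (Real.log (Real.sin (π * x)))) :=
    ((Real.continuousAt_log (by rw [hπx]; exact hsin.ne')).tendsto).comp hP
  have hsum := (summable_gfn hα').hasSum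
  have htend : Tendsto (fun n : ℕ => ∑ j ∈ Finset.range n, gfn j α) atTop
      (nhds (Real.log (Real.sin (α / 2)) - Real.log (α / 2))) := by
    have := hcont
    simp_rw [hlog, hπx] at this
    have h3 := this.sub_const (Real.log (α / 2))
    simpa using h3
  have h4 := hsum.tendsto_sum_nat
  have := tendsto_nhds_unique h4 htend
  rwa [this] at hsum

lemma hasSum_wfn_pos {α : ℝ} (hα : α ∈ Ioo 0 π) :
    HasSum (fun n => wfn n α)
      ((1 / 2) * (Real.cos (α / 2) / Real.sin (α / 2)) - 1 / α) := by
  have hπ := Real.pi_pos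
  obtain ⟨h1, h2⟩ := hα
  have hsub : Ioo (0:ℝ) π ⊆ Ioo (-π) π := fun y hy => ⟨by linarith [hy.1], hy.2⟩
  have hαt : α ∈ Ioo (0:ℝ) π := ⟨h1, h2⟩
  have hsin : (0:ℝ) < Real.sin (α / 2) :=
    Real.sin_pos_of_pos_of_lt_pi (by linarith) (by linarith)
  -- derivative of the tsum
  have hD : HasDerivAt (fun z => ∑' n, gfn n z) (∑' n, wfn n α) α := by
    apply hasDerivAt_tsum_of_isPreconnected summable_ubnd isOpen_Ioo
      (convex_Ioo (0:ℝ) π).isPreconnected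
      (fun n y hy => hasDerivAt_gfn (hsub hy))
      (fun n y hy => by simpa [Real.norm_eq_abs] using wfn_bound (n := n) (hsub hy))
      hαt (summable_gfn (hsub hαt)) hαt
  -- the tsum equals log(sin(z/2)) - log(z/2) on Ioo 0 π
  have hEq : (fun z => ∑' n, gfn n z) =ᶠ[nhds α]
      (fun z => Real.log (Real.sin (z / 2)) - Real.log (z / 2)) := by
    filter_upwards [isOpen_Ioo.mem_nhds hαt] with y hy
    exact (hasSum_gfn hy).tsum_eq
  have hD2 : HasDerivAt (fun z => Real.log (Real.sin (z / 2)) - Real.log (z / 2))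
      (∑' n, wfn n α) α := hD.congr_of_eventuallyEq hEq.symm
  -- direct derivative computation
  have hhalf : HasDerivAt (fun z : ℝ => z / 2) (1 / 2) α := (hasDerivAt_id α).div_const 2
  have hDsin : HasDerivAt (fun z : ℝ => Real.sin (z / 2)) (Real.cos (α / 2) * (1 / 2)) α :=
    by have := (Real.hasDerivAt_sin (α / 2)).comp α hhalf; exact this
  have hD3 : HasDerivAt (fun z => Real.log (Real.sin (z / 2)) - Real.log (z / 2))
      ((Real.cos (α / 2) * (1 / 2)) / Real.sin (α / 2) - (1 / 2) / (α / 2)) α :=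
    (hDsin.log hsin.ne').sub (hhalf.log (by positivity))
  have hkey : ∑' n, wfn n α
      = (1 / 2) * (Real.cos (α / 2) / Real.sin (α / 2)) - 1 / α := by
    have := hD2.unique hD3
    rw [this]
    field_simp
  have hsumm : Summable (fun n => wfn n α) :=
    Summable.of_norm_bounded summable_ubnd
      (fun n => by simpa [Real.norm_eq_abs] using wfn_bound (n := n) (hsub hαt))
  have := hsumm.hasSum
  rwa [hkey] at this

lemma hasSum_wfn {α : ℝ} (hα : α ∈ Ioo (-π) π) (hne : α ≠ 0) :
    HasSum (fun n => wfn n α)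
      ((1 / 2) * (Real.cos (α / 2) / Real.sin (α / 2)) - 1 / α) := by
  rcases lt_or_gt_of_ne hne with hneg | hpos
  · have h := (hasSum_wfn_pos (α := -α) ⟨by linarith, by linarith [hα.1]⟩).neg
    have heq : ∀ n : ℕ, -(wfn n (-α)) = wfn n α := by
      intro n; rw [wfn, wfn]; ring_nf
    have heq2 : -((1 / 2) * (Real.cos (-α / 2) / Real.sin (-α / 2)) - 1 / (-α))
        = (1 / 2) * (Real.cos (α / 2) / Real.sin (α / 2)) - 1 / α := by
      rw [neg_div, Real.cos_neg, Real.sin_neg, div_neg, div_neg]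
      ring
    rw [heq2] at h
    exact h.congr_fun (fun n => (heq n).symm)
  · exact hasSum_wfn_pos ⟨hpos, hα.2⟩

variable {h : ℝ → ℝ}

lemma cts_intInt (hcont : Continuous h) {a b : ℝ} (hab : ∀ x ∈ Set.uIcc a b, x ≠ 0) :
    IntervalIntegrable (fun α => h α / α) MeasureTheory.volume a b :=
  (ContinuousOn.div hcont.continuousOn continuousOn_id hab).intervalIntegrable

lemma cts_shift_intInt (hcont : Continuous h) {a b c : ℝ} (hab : ∀ x ∈ Set.uIcc a b, x + c ≠ 0) :
    IntervalIntegrable (fun α => h α / (α + c)) MeasureTheory.volume a b :=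
  (ContinuousOn.div hcont.continuousOn
    ((continuous_id.add continuous_const).continuousOn) hab).intervalIntegrable

lemma piece_pos (hcont : Continuous h) (N : ℕ) :
    IntervalIntegrable (fun α => h α / α) MeasureTheory.volume
      ((2*(N:ℝ)+1)*π) ((2*(N:ℝ)+3)*π) := by
  have hπ := Real.pi_pos
  apply cts_intInt hcont
  intro x hx
  rw [uIcc_of_le (by nlinarith [Nat.cast_nonneg (α := ℝ) N])] at hx
  nlinarith [hx.1, Nat.cast_nonneg (α := ℝ) N]

lemma piece_neg (hcont : Continuous h) (N : ℕ) :
    IntervalIntegrable (fun α => h α / α) MeasureTheory.volume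
      (-((2*(N:ℝ)+3)*π)) (-((2*(N:ℝ)+1)*π)) := by
  have hπ := Real.pi_pos
  apply cts_intInt hcont
  intro x hx
  rw [uIcc_of_le (by nlinarith [Nat.cast_nonneg (α := ℝ) N])] at hx
  nlinarith [hx.2, Nat.cast_nonneg (α := ℝ) N]

lemma window_intInt (hcont : Continuous h)
    (hint : IntegrableOn (fun α => h α / α) (Ioo (-π) π)) (N : ℕ) :
    IntervalIntegrable (fun α => h α / α) MeasureTheory.volume
      (-((2*(N:ℝ)+1)*π)) ((2*(N:ℝ)+1)*π) := by
  have hπ := Real.pi_pos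
  induction N with
  | zero =>
      rw [show (2*((0:ℕ):ℝ)+1)*π = π by push_cast; ring]
      rw [intervalIntegrable_iff_integrableOn_Ioo_of_le (by linarith)]
      exact hint
  | succ N ih =>
      have hcast : (2*(((N+1):ℕ):ℝ)+1)*π = (2*(N:ℝ)+3)*π := by push_cast; ring
      rw [hcast]
      exact ((piece_neg hcont N).trans (ih.trans (piece_pos hcont N)))

lemma shift_pos (hper : Function.Periodic h (2 * π)) (N : ℕ) :
    (∫ α in ((2*(N:ℝ)+1)*π)..((2*(N:ℝ)+3)*π), h α / α)
      = ∫ x in (-π)..π, h x / (x + 2*((N:ℝ)+1)*π) := by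
  set c : ℝ := 2*((N:ℝ)+1)*π with hc
  have hpc : ∀ x : ℝ, h (x + c) = h x := by
    intro x
    have := (hper.nat_mul (N+1)) x
    rwa [show ((N+1:ℕ):ℝ) * (2*π) = c by rw [hc]; push_cast; ring] at this
  have key := intervalIntegral.integral_comp_add_right (a := -π) (b := π)
    (fun α => h α / α) c
  simp only [hpc] at key
  rw [show -π + c = (2*(N:ℝ)+1)*π by rw [hc]; ring,
    show π + c = (2*(N:ℝ)+3)*π by rw [hc]; ring] at key
  exact key.symm

lemma shift_neg (hper : Function.Periodic h (2 * π)) (N : ℕ) :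
    (∫ α in (-((2*(N:ℝ)+3)*π))..(-((2*(N:ℝ)+1)*π)), h α / α)
      = ∫ x in (-π)..π, h x / (x - 2*((N:ℝ)+1)*π) := by
  set c : ℝ := 2*((N:ℝ)+1)*π with hc
  have hpc : ∀ x : ℝ, h (x - c) = h x := by
    intro x
    have := (hper.nat_mul (N+1)).sub_eq x
    rwa [show ((N+1:ℕ):ℝ) * (2*π) = c by rw [hc]; push_cast; ring] at this
  have key := intervalIntegral.integral_comp_sub_right (a := -π) (b := π)
    (fun α => h α / α) c
  simp only [hpc] at key
  rw [show -π - c = -((2*(N:ℝ)+3)*π) by rw [hc]; ring,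
    show π - c = -((2*(N:ℝ)+1)*π) by rw [hc]; ring] at key
  exact key.symm

lemma window_eq (hcont : Continuous h) (hper : Function.Periodic h (2 * π))
    (hint : IntegrableOn (fun α => h α / α) (Ioo (-π) π)) (N : ℕ) :
    (∫ α in (-((2*(N:ℝ)+1)*π))..((2*(N:ℝ)+1)*π), h α / α)
      = (∫ α in (-π)..π, h α / α)
        + ∑ n ∈ Finset.range N,
            ∫ α in (-π)..π, (h α / (α + 2*((n:ℝ)+1)*π) + h α / (α - 2*((n:ℝ)+1)*π)) := by
  have hπ := Real.pi_pos
  induction N with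
  | zero =>
      rw [show (2*((0:ℕ):ℝ)+1)*π = π by push_cast; ring]
      simp
  | succ N ih =>
      have hcast : (2*(((N+1):ℕ):ℝ)+1)*π = (2*(N:ℝ)+3)*π := by push_cast; ring
      rw [hcast]
      have hK := window_intInt hcont hint N
      have hpp := piece_pos hcont N
      have hpn := piece_neg hcont N
      have e2 := intervalIntegral.integral_add_adjacent_intervals hK hpp
      have e1 := intervalIntegral.integral_add_adjacent_intervals hpn (hK.trans hpp)
      have hIadd : IntervalIntegrable
          (fun α => h α / (α + 2*((N:ℝ)+1)*π) + h α / (α - 2*((N:ℝ)+1)*π))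
          MeasureTheory.volume (-π) π := by
        apply IntervalIntegrable.add
        · apply cts_shift_intInt hcont
          intro x hx
          rw [uIcc_of_le (by linarith)] at hx
          nlinarith [hx.1, Nat.cast_nonneg (α := ℝ) N]
        · have := cts_shift_intInt (a := -π) (b := π) hcont (c := -(2*((N:ℝ)+1)*π)) ?_
          · simpa [sub_eq_add_neg] using this
          · intro x hx
            rw [uIcc_of_le (by linarith)] at hx
            nlinarith [hx.2, Nat.cast_nonneg (α := ℝ) N]
      have hsplit : (∫ α in (-π)..π,
            (h α / (α + 2*((N:ℝ)+1)*π) + h α / (α - 2*((N:ℝ)+1)*π)))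
          = (∫ α in (-π)..π, h α / (α + 2*((N:ℝ)+1)*π))
            + ∫ α in (-π)..π, h α / (α - 2*((N:ℝ)+1)*π) := by
        apply intervalIntegral.integral_add
        · apply cts_shift_intInt hcont
          intro x hx
          rw [uIcc_of_le (by linarith)] at hx
          nlinarith [hx.1, Nat.cast_nonneg (α := ℝ) N]
        · have := cts_shift_intInt (a := -π) (b := π) hcont (c := -(2*((N:ℝ)+1)*π)) ?_
          · simpa [sub_eq_add_neg] using this
          · intro x hx
            rw [uIcc_of_le (by linarith)] at hx
            nlinarith [hx.2, Nat.cast_nonneg (α := ℝ) N]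
      have hs1 := shift_pos hper N
      have hs2 := shift_neg hper N
      rw [Finset.sum_range_succ]
      linarith [ih, e1, e2, hsplit, hs1, hs2]

lemma measurable_wfn (n : ℕ) : Measurable (wfn n) := by
  unfold wfn
  exact (measurable_const.mul measurable_id).div
    ((measurable_id.pow_const 2).sub measurable_const)

lemma pair_integral_eq (hcont : Continuous h) (n : ℕ) :
    (∫ α in (-π)..π, (h α / (α + 2*((n:ℝ)+1)*π) + h α / (α - 2*((n:ℝ)+1)*π)))
      = ∫ α in Ioo (-π) π, h α * wfn n α := by
  have hπ := Real.pi_pos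
  rw [intervalIntegral.integral_of_le (by linarith), MeasureTheory.integral_Ioc_eq_integral_Ioo]
  apply MeasureTheory.setIntegral_congr_fun measurableSet_Ioo
  intro α hα
  obtain ⟨h1, h2⟩ := hα
  have hn0 : (0:ℝ) ≤ (n:ℝ) := Nat.cast_nonneg n
  have hne1 : α + 2*((n:ℝ)+1)*π ≠ 0 := by nlinarith
  have hne2 : α - 2*((n:ℝ)+1)*π ≠ 0 := by nlinarith
  have hd : α ^ 2 - (2*((n:ℝ)+1)*π) ^ 2 ≠ 0 := by
    have : α ^ 2 - (2*((n:ℝ)+1)*π) ^ 2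
        = (α + 2*((n:ℝ)+1)*π) * (α - 2*((n:ℝ)+1)*π) := by ring
    rw [this]
    exact mul_ne_zero hne1 hne2
  show _ = h α * wfn n α
  rw [wfn]
  dsimp only
  rw [div_add_div _ _ hne1 hne2, mul_div_assoc', div_eq_div_iff (mul_ne_zero hne1 hne2) hd]
  ring

lemma integrableOn_h_wfn (hcont : Continuous h) (n : ℕ) :
    IntegrableOn (fun α => h α * wfn n α) (Ioo (-π) π) := by
  have hπ := Real.pi_pos
  apply (ContinuousOn.integrableOn_Icc ?_).mono_set Ioo_subset_Icc_self
  apply hcont.continuousOn.mul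
  apply ContinuousOn.div (continuousOn_const.mul continuousOn_id)
    (((continuous_pow 2).sub continuous_const).continuousOn)
  intro x hx
  obtain ⟨h1, h2⟩ := hx
  have hn0 : (0:ℝ) ≤ (n:ℝ) := Nat.cast_nonneg n
  have hx2 : x ^ 2 ≤ π ^ 2 := by nlinarith
  have : π ^ 2 < (2*((n:ℝ)+1)*π) ^ 2 := by
    have hexp : (2*((n:ℝ)+1)*π) ^ 2 = 4*((n:ℝ)+1)^2*π^2 := by ring
    have hone : (1:ℝ) ≤ ((n:ℝ)+1)^2 := by nlinarith
    nlinarith [sq_nonneg π]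
  intro hcon
  nlinarith [sub_eq_zero.mp hcon]

lemma tendsto_partial (hcont : Continuous h)
    (hint : IntegrableOn (fun α => h α / α) (Ioo (-π) π)) :
    Tendsto (fun N : ℕ => ∑ n ∈ Finset.range N, ∫ α in Ioo (-π) π, h α * wfn n α)
      atTop (nhds (∫ α in Ioo (-π) π,
        h α * ((1 / 2) * (Real.cos (α / 2) / Real.sin (α / 2)) - 1 / α))) := by
  have hπ := Real.pi_pos
  obtain ⟨C, hC⟩ := isCompact_Icc.exists_bound_of_continuousOn
    (s := Icc (-π) π) hcont.continuousOn
  have hC0 : 0 ≤ C := le_trans (norm_nonneg _) (hC 0 ⟨by linarith, by linarith⟩)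
  set B : ℝ := ∑' n, ubnd n with hB
  have hrw : ∀ N : ℕ, (∑ n ∈ Finset.range N, ∫ α in Ioo (-π) π, h α * wfn n α)
      = ∫ α in Ioo (-π) π, h α * (∑ n ∈ Finset.range N, wfn n α) := by
    intro N
    rw [← MeasureTheory.integral_finset_sum _ (fun n _ => integrableOn_h_wfn hcont n)]
    congr 1
    funext α
    rw [Finset.mul_sum]
  simp_rw [hrw]
  apply MeasureTheory.tendsto_integral_of_dominated_convergence (bound := fun _ => C * B)
  · intro N
    exact (hcont.measurable.mul
      (Finset.measurable_sum _ (fun n _ => measurable_wfn n))).aestronglyMeasurable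
  · exact MeasureTheory.integrableOn_const measure_Ioo_lt_top.ne
  · intro N
    rw [MeasureTheory.ae_restrict_iff' measurableSet_Ioo]
    apply MeasureTheory.ae_of_all
    intro α hα
    rw [Real.norm_eq_abs, abs_mul]
    have h1 : |h α| ≤ C := by
      have := hC α (Ioo_subset_Icc_self hα)
      rwa [Real.norm_eq_abs] at this
    have h2 : |∑ n ∈ Finset.range N, wfn n α| ≤ B := by
      refine le_trans (Finset.abs_sum_le_sum_abs _ _) ?_
      refine le_trans (Finset.sum_le_sum (fun n _ => wfn_bound hα)) ?_
      exact summable_ubnd.sum_le_tsum _ (fun n _ => by rw [ubnd]; positivity)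
    exact mul_le_mul h1 h2 (abs_nonneg _) hC0
  · have h0 : ∀ᵐ (α : ℝ) ∂(MeasureTheory.volume.restrict (Ioo (-π) π)), α ≠ 0 := by
      apply MeasureTheory.ae_restrict_of_ae
      rw [MeasureTheory.ae_iff]
      have : {a : ℝ | ¬ a ≠ 0} = {0} := by ext a; simp
      rw [this]
      exact MeasureTheory.measure_singleton 0
    filter_upwards [MeasureTheory.ae_restrict_mem measurableSet_Ioo, h0] with α hmem hne
    exact ((hasSum_wfn hmem hne).tendsto_sum_nat).const_mul (h α)

lemma abs_tail_le {α : ℝ} (hα : α ∈ Ioo (-π) π) (hne : α ≠ 0) :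
    |(1 / 2) * (Real.cos (α / 2) / Real.sin (α / 2)) - 1 / α| ≤ ∑' n, ubnd n := by
  have hs := hasSum_wfn hα hne
  rw [← hs.tsum_eq, ← Real.norm_eq_abs]
  exact tsum_of_norm_bounded summable_ubnd.hasSum
    (fun n => by rw [Real.norm_eq_abs]; exact wfn_bound hα)

lemma integrable_f (hcont : Continuous h) :
    IntegrableOn (fun α => h α * ((1 / 2) * (Real.cos (α / 2) / Real.sin (α / 2)) - 1 / α))
      (Ioo (-π) π) := by
  have hπ := Real.pi_pos
  obtain ⟨C, hC⟩ := isCompact_Icc.exists_bound_of_continuousOn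
    (s := Icc (-π) π) hcont.continuousOn
  have hC0 : 0 ≤ C := le_trans (norm_nonneg _) (hC 0 ⟨by linarith, by linarith⟩)
  set B : ℝ := ∑' n, ubnd n with hB
  apply MeasureTheory.Integrable.mono'
    (g := fun _ => C * B) (MeasureTheory.integrableOn_const measure_Ioo_lt_top.ne)
  · apply Measurable.aestronglyMeasurable
    apply hcont.measurable.mul
    apply Measurable.sub
    · exact measurable_const.mul
        (((Real.continuous_cos.comp (continuous_id.div_const 2)).measurable).div
         ((Real.continuous_sin.comp (continuous_id.div_const 2)).measurable))
    · exact measurable_const.div measurable_id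
  · have h0 : ∀ᵐ (α : ℝ) ∂(MeasureTheory.volume.restrict (Ioo (-π) π)), α ≠ 0 := by
      apply MeasureTheory.ae_restrict_of_ae
      rw [MeasureTheory.ae_iff]
      have : {a : ℝ | ¬ a ≠ 0} = {0} := by ext a; simp
      rw [this]
      exact MeasureTheory.measure_singleton 0
    filter_upwards [MeasureTheory.ae_restrict_mem measurableSet_Ioo, h0] with α hmem hne
    rw [Real.norm_eq_abs, abs_mul]
    have h1 : |h α| ≤ C := by
      have := hC α (Ioo_subset_Icc_self hmem)
      rwa [Real.norm_eq_abs] at this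
    exact mul_le_mul h1 (abs_tail_le hmem hne) (abs_nonneg _) hC0

end AuxPSI
open Real in
/-- For continuous `2π`-periodic `h` with `α ↦ h(α)/α` integrable on
`(−π,π)`, the principal-value integral over `ℝ` of `h(α)/α` (along the symmetric windows
`(−(2N+1)π, (2N+1)π)`) equals the periodic singular integral `∫_{−π}^{π} h(α)·(1/2)cot(α/2) dα`. -/
theorem periodic_singular_integral_identity
    (h : ℝ → ℝ) (hcont : Continuous h) (hper : Function.Periodic h (2 * Real.pi))
    (hint : IntegrableOn (fun α => h α / α) (Ioo (-Real.pi) Real.pi)) :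
    Tendsto (fun N : ℕ =>
        ∫ α in (-((2 * (N : ℝ) + 1) * Real.pi))..((2 * (N : ℝ) + 1) * Real.pi), h α / α)
      atTop
      (nhds (∫ α in (-Real.pi)..Real.pi,
        h α * ((1 / 2) * (Real.cos (α / 2) / Real.sin (α / 2))))) := by
  have hπ := Real.pi_pos
  have hfun : (fun N : ℕ =>
      ∫ α in (-((2 * (N : ℝ) + 1) * Real.pi))..((2 * (N : ℝ) + 1) * Real.pi), h α / α)
      = fun N : ℕ => (∫ α in (-π)..π, h α / α)
          + ∑ n ∈ Finset.range N, ∫ α in Ioo (-π) π, h α * wfn n α := by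
    funext N
    rw [window_eq hcont hper hint N]
    congr 1
    exact Finset.sum_congr rfl (fun n _ => pair_integral_eq hcont n)
  rw [hfun]
  have hA : (∫ α in (-π)..π, h α / α) = ∫ α in Ioo (-π) π, h α / α := by
    rw [intervalIntegral.integral_of_le (by linarith), MeasureTheory.integral_Ioc_eq_integral_Ioo]
  have hRHS : (∫ α in (-Real.pi)..Real.pi,
        h α * ((1 / 2) * (Real.cos (α / 2) / Real.sin (α / 2))))
      = (∫ α in Ioo (-π) π, h α / α)
        + ∫ α in Ioo (-π) π,
            h α * ((1 / 2) * (Real.cos (α / 2) / Real.sin (α / 2)) - 1 / α) := by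
    rw [intervalIntegral.integral_of_le (by linarith), MeasureTheory.integral_Ioc_eq_integral_Ioo]
    rw [← MeasureTheory.integral_add hint (integrable_f hcont)]
    congr 1
    funext α
    rw [div_eq_mul_inv, ← one_div]
    ring
  rw [hRHS, hA]
  exact (tendsto_partial hcont hint).const_add _
end

section
/- Let N ≥ 1 be an integer and κ₁ ∈ (0,1). Let h : ℝ → ℝ^N be continuously differentiable and 2π-periodic with [h′]_{Ċ^{κ₁}} < ∞. Then there is a constant C depending only on κ₁ and N such that for every x ∈ ℝ and every α ∈ (−π, π) with α ≠ 0: ‖h′(x − α) − (1/2)·cot(α/2)·(h(x) − h(x − α))‖ ≤ C |α|^{κ₁} [h′]_{Ċ^{κ₁}}. -/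
set_option maxHeartbeats 1000000
open Set Real

section aux

lemma trig_aux_pos {s : ℝ} (h1 : 0 < s) (h2 : s < π / 2) :
    0 ≤ s * Real.cos s / Real.sin s ∧ s * Real.cos s / Real.sin s ≤ 1 ∧
      1 - s * Real.cos s / Real.sin s ≤ π * s ^ 2 := by
  have hsin : 0 < Real.sin s := Real.sin_pos_of_pos_of_lt_pi h1 (by linarith [Real.pi_gt_three])
  have hcos : 0 < Real.cos s := Real.cos_pos_of_mem_Ioo ⟨by linarith, h2⟩
  have htan : s < Real.tan s := Real.lt_tan h1 h2
  rw [Real.tan_eq_sin_div_cos] at htan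
  have hc1 : s * Real.cos s ≤ Real.sin s := ((lt_div_iff₀ hcos).mp htan).le
  refine ⟨by positivity, by rw [div_le_one hsin]; exact hc1, ?_⟩
  have hjordan : 2 / π * s ≤ Real.sin s := Real.mul_le_sin h1.le h2.le
  have hcosl : 1 - s ^ 2 / 2 ≤ Real.cos s := Real.one_sub_sq_div_two_le_cos
  have hsle : Real.sin s ≤ s := Real.sin_le h1.le
  have hπ : 0 < π := Real.pi_pos
  rw [sub_le_iff_le_add, ← sub_le_iff_le_add', le_div_iff₀ hsin]
  have key : Real.sin s - s * Real.cos s ≤ π * s ^ 2 * Real.sin s := by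
    have h3 : Real.sin s - s * Real.cos s ≤ s * (1 - Real.cos s) := by nlinarith
    have heq : π * s ^ 2 * (2 / π * s) = 2 * s ^ 3 := by field_simp
    have h4 : π * s ^ 2 * (2 / π * s) ≤ π * s ^ 2 * Real.sin s :=
      mul_le_mul_of_nonneg_left hjordan (by positivity)
    rw [heq] at h4
    nlinarith
  nlinarith

lemma trig_aux {s : ℝ} (h0 : s ≠ 0) (h2 : |s| < π / 2) :
    0 ≤ s * Real.cos s / Real.sin s ∧ s * Real.cos s / Real.sin s ≤ 1 ∧
      1 - s * Real.cos s / Real.sin s ≤ π * s ^ 2 := by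
  rcases h0.lt_or_gt with hs | hs
  · have := trig_aux_pos (s := -s) (by linarith) (by rwa [abs_of_neg hs] at h2)
    rw [Real.cos_neg, Real.sin_neg, neg_mul, neg_div_neg_eq] at this
    simpa using this
  · exact trig_aux_pos hs (by rwa [abs_of_pos hs] at h2)

variable {N : ℕ} (h : ℝ → EuclideanSpace ℝ (Fin N)) (K κ₁ : ℝ)

lemma integral_bound (hh : ContDiff ℝ 1 h)
    (hK : ∀ x y : ℝ, ‖deriv h x - deriv h y‖ ≤ K * |x - y| ^ κ₁)
    (hK0 : 0 ≤ K) (hκ : 0 ≤ κ₁) (a b : ℝ) :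
    ‖(b - a) • deriv h a - (h b - h a)‖ ≤ K * |b - a| ^ κ₁ * |b - a| := by
  have hcont : Continuous (deriv h) := hh.continuous_deriv le_rfl
  have hftc : ∫ t in a..b, deriv h t = h b - h a :=
    intervalIntegral.integral_deriv_eq_sub
      (fun t _ => (hh.differentiable one_ne_zero).differentiableAt)
      (hcont.intervalIntegrable _ _)
  have heq : (b - a) • deriv h a - (h b - h a) = ∫ t in a..b, (deriv h a - deriv h t) := by
    rw [intervalIntegral.integral_sub intervalIntegrable_const (hcont.intervalIntegrable _ _),
      intervalIntegral.integral_const, hftc]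
  rw [heq]
  apply intervalIntegral.norm_integral_le_of_norm_le_const
  intro t ht
  have h5 : |a - t| ≤ |b - a| := by
    rcases Set.mem_uIoc.mp ht with ⟨h1, h2⟩ | ⟨h1, h2⟩
    · rw [abs_of_nonpos (by linarith), abs_of_nonneg (by linarith)]; linarith
    · rw [abs_of_nonneg (by linarith), abs_of_nonpos (by linarith)]; linarith
  calc ‖deriv h a - deriv h t‖ ≤ K * |a - t| ^ κ₁ := hK a t
    _ ≤ K * |b - a| ^ κ₁ :=
      mul_le_mul_of_nonneg_left (Real.rpow_le_rpow (abs_nonneg _) h5 hκ) hK0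

lemma deriv_sup_bound (hh : ContDiff ℝ 1 h) (hp : Function.Periodic h (2 * π))
    (hK : ∀ x y : ℝ, ‖deriv h x - deriv h y‖ ≤ K * |x - y| ^ κ₁)
    (hK0 : 0 ≤ K) (hκ : 0 ≤ κ₁) (z : ℝ) :
    ‖deriv h z‖ ≤ K * (2 * π) ^ κ₁ := by
  have hπ : 0 < π := Real.pi_pos
  have := integral_bound h K κ₁ hh hK hK0 hκ z (z + 2 * π)
  rw [hp z, add_sub_cancel_left, sub_self, sub_zero, norm_smul] at this
  rw [Real.norm_eq_abs, abs_of_pos (by positivity : (0:ℝ) < 2 * π)] at this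
  calc ‖deriv h z‖ = (2 * π) * ‖deriv h z‖ / (2 * π) := by field_simp
    _ ≤ K * (2 * π) ^ κ₁ * (2 * π) / (2 * π) := by
        apply div_le_div_of_nonneg_right ?_ (by positivity)
        linarith [this]
    _ = K * (2 * π) ^ κ₁ := by field_simp

end aux

/-- For a `C¹`, `2π`-periodic map `h` with `κ₁`-Hölder derivative, the
deviation `Ẽ^α h(x) = h′(x−α) − (1/2)cot(α/2)(h(x) − h(x−α))` is bounded by
`C |α|^{κ₁} [h′]_{Ċ^{κ₁}}`. -/
theorem periodic_difference_quotient_deviation_bound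
    (N : ℕ) (hN : 1 ≤ N) (κ₁ : ℝ) (hκ₁ : κ₁ ∈ Ioo (0 : ℝ) 1) :
    ∃ C : ℝ, 0 < C ∧
      ∀ (h : ℝ → EuclideanSpace ℝ (Fin N)) (K : ℝ),
        ContDiff ℝ 1 h →
        Function.Periodic h (2 * Real.pi) →
        (∀ x y : ℝ, ‖deriv h x - deriv h y‖ ≤ K * |x - y| ^ κ₁) →
        ∀ x : ℝ, ∀ α ∈ Ioo (-Real.pi) Real.pi, α ≠ 0 →
          ‖deriv h (x - α) -
              ((1 / 2) * (Real.cos (α / 2) / Real.sin (α / 2))) • (h x - h (x - α))‖ ≤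
            C * |α| ^ κ₁ * K := by
  obtain ⟨hκ0, hκ1⟩ := hκ₁
  have hπ : 0 < π := Real.pi_pos
  refine ⟨200, by norm_num, fun h K hh hp hK x α hα hα0 => ?_⟩
  obtain ⟨hα1, hα2⟩ := hα
  have hK0 : 0 ≤ K := by
    have := hK 0 1
    simp at this
    nlinarith [norm_nonneg (deriv h 0 - deriv h 1)]
  -- notation
  set v := deriv h (x - α) with hv
  set lam : ℝ := (1 / 2) * (Real.cos (α / 2) / Real.sin (α / 2)) with hlam
  set Δ := h x - h (x - α) with hΔ
  have habs : |α / 2| < π / 2 := by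
    rw [abs_lt]; constructor <;> [linarith; linarith]
  obtain ⟨hc0, hc1, hc2⟩ := trig_aux (s := α / 2) (by simpa using hα0) habs
  have hceq : lam * α = (α / 2) * Real.cos (α / 2) / Real.sin (α / 2) := by
    rw [hlam]; ring
  -- decomposition
  have hdec : v - lam • Δ = (1 - lam * α) • v + lam • (α • v - Δ) := by
    module
  have hB : ‖α • v - Δ‖ ≤ K * |α| ^ κ₁ * |α| := by
    have := integral_bound h K κ₁ hh hK hK0 hκ0.le (x - α) x
    simpa using this
  have hC : ‖v‖ ≤ K * (2 * π) ^ κ₁ :=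
    deriv_sup_bound h K κ₁ hh hp hK hK0 hκ0.le (x - α)
  -- |α| facts
  have hαpos : 0 < |α| := abs_pos.mpr hα0
  have hαπ : |α| ≤ π := by rw [abs_le]; constructor <;> linarith
  have hT0 : 0 ≤ |α| ^ κ₁ := Real.rpow_nonneg (abs_nonneg _) _
  -- |α| ≤ π * |α|^κ₁
  have hlin : |α| ≤ π * |α| ^ κ₁ := by
    have h1 : |α| = |α| ^ (1 - κ₁) * |α| ^ κ₁ := by
      rw [← Real.rpow_add hαpos]; norm_num
    have h2 : |α| ^ (1 - κ₁) ≤ π ^ (1 - κ₁) :=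
      Real.rpow_le_rpow (abs_nonneg _) hαπ (by linarith)
    have h3 : π ^ (1 - κ₁) ≤ π ^ (1 : ℝ) :=
      Real.rpow_le_rpow_of_exponent_le (by linarith [Real.pi_gt_three]) (by linarith)
    rw [Real.rpow_one] at h3
    calc |α| = |α| ^ (1 - κ₁) * |α| ^ κ₁ := h1
      _ ≤ π * |α| ^ κ₁ := mul_le_mul_of_nonneg_right (h2.trans h3) hT0
  -- (2π)^κ₁ ≤ 2π
  have h2π : (2 * π) ^ κ₁ ≤ 2 * π := by
    have := Real.rpow_le_rpow_of_exponent_le (x := 2 * π) (by linarith [Real.pi_gt_three])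
      (le_of_lt hκ1)
    rwa [Real.rpow_one] at this
  -- assemble
  rw [hdec]
  have hmain : ‖(1 - lam * α) • v + lam • (α • v - Δ)‖ ≤
      |1 - lam * α| * ‖v‖ + |lam| * ‖α • v - Δ‖ := by
    calc ‖(1 - lam * α) • v + lam • (α • v - Δ)‖
        ≤ ‖(1 - lam * α) • v‖ + ‖lam • (α • v - Δ)‖ := norm_add_le _ _
      _ = |1 - lam * α| * ‖v‖ + |lam| * ‖α • v - Δ‖ := by rw [norm_smul, norm_smul]; rfl
  -- bound term 1
  have hc2' : |1 - lam * α| ≤ π * (α / 2) ^ 2 := by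
    rw [hceq, abs_of_nonneg (by linarith)]
    exact hc2
  have ht1 : |1 - lam * α| * ‖v‖ ≤ π * (α / 2) ^ 2 * (K * (2 * π)) := by
    apply mul_le_mul hc2' (hC.trans ?_) (norm_nonneg _) (by positivity)
    exact mul_le_mul_of_nonneg_left h2π hK0
  -- bound term 2
  have ht2 : |lam| * ‖α • v - Δ‖ ≤ K * |α| ^ κ₁ := by
    have hlc : |lam| * |α| ≤ 1 := by
      rw [← abs_mul, hceq, abs_of_nonneg hc0]; exact hc1
    calc |lam| * ‖α • v - Δ‖ ≤ |lam| * (K * |α| ^ κ₁ * |α|) :=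
          mul_le_mul_of_nonneg_left hB (abs_nonneg _)
      _ = (|lam| * |α|) * (K * |α| ^ κ₁) := by ring
      _ ≤ 1 * (K * |α| ^ κ₁) := mul_le_mul_of_nonneg_right hlc (by positivity)
      _ = K * |α| ^ κ₁ := one_mul _
  -- final numeric estimate
  have hsq : π * (α / 2) ^ 2 * (K * (2 * π)) ≤ 199 * |α| ^ κ₁ * K := by
    have hα2' : (α / 2) ^ 2 ≤ |α| * |α| / 4 := by
      nlinarith [abs_mul_abs_self α]
    have hπ4 : π ≤ 4 := Real.pi_le_four
    have : π * (α / 2) ^ 2 * (K * (2 * π)) ≤ π * (|α| * |α| / 4) * (K * (2 * π)) := by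
      apply mul_le_mul_of_nonneg_right (mul_le_mul_of_nonneg_left hα2' hπ.le) (by positivity)
    calc π * (α / 2) ^ 2 * (K * (2 * π)) ≤ π * (|α| * |α| / 4) * (K * (2 * π)) := this
      _ ≤ π * (π * (π * |α| ^ κ₁) / 4) * (K * (2 * π)) := by
          apply mul_le_mul_of_nonneg_right ?_ (by positivity)
          apply mul_le_mul_of_nonneg_left ?_ hπ.le
          apply div_le_div_of_nonneg_right ?_ (by norm_num)
          exact mul_le_mul hαπ hlin (abs_nonneg _) hπ.le
      _ = (π ^ 4 / 2) * |α| ^ κ₁ * K := by ring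
      _ = (π ^ 4 / 2) * (|α| ^ κ₁ * K) := by ring
      _ ≤ 199 * (|α| ^ κ₁ * K) := by
          apply mul_le_mul_of_nonneg_right ?_ (mul_nonneg hT0 hK0)
          have h16 : π ^ 2 ≤ 16 := by nlinarith [Real.pi_le_four, hπ.le]
          nlinarith [sq_nonneg (π ^ 2), hπ.le]
      _ = 199 * |α| ^ κ₁ * K := by ring
  calc ‖(1 - lam * α) • v + lam • (α • v - Δ)‖
      ≤ |1 - lam * α| * ‖v‖ + |lam| * ‖α • v - Δ‖ := hmain
    _ ≤ π * (α / 2) ^ 2 * (K * (2 * π)) + K * |α| ^ κ₁ := add_le_add ht1 ht2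
    _ ≤ 199 * |α| ^ κ₁ * K + K * |α| ^ κ₁ := add_le_add hsq le_rfl
    _ = 200 * |α| ^ κ₁ * K := by ring
end
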